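/- arXiv:1106.2647 — 7 statements merged into one kernel-verified Lean document; each statement's English description precedes it below -/
import Mathlib

section
/- For every signature S, exactly the same formulas of Lprop(S) are valid with respect to the class Trec(S) of recursive causal models and with respect to the class Mrec(Φ_S) of recursive counterfactual structures: a formula φ ∈ Lprop(S) is valid in Trec(S) if and only if it is valid in Mrec(Φ_S). -/
/-! ## Signatures -/

structure Signature where
  exo : Type
  endo : Type
  exoFin : Fintype exo
  endoFin : Fintype endo
  endoDec : DecidableEq endo
  exoRange : exo → Type
  range : endo → Type
  exoRangeFin : ∀ u, Fintype (exoRange u)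
  rangeFin : ∀ X, Fintype (range X)
  exoRangeNe : ∀ u, Nonempty (exoRange u)
  rangeNe : ∀ X, Nonempty (range X)

attribute [instance] Signature.exoFin Signature.endoFin Signature.endoDec
  Signature.exoRangeFin Signature.rangeFin Signature.exoRangeNe Signature.rangeNe

/-- A context: an assignment of values to the exogenous variables. -/
abbrev Signature.Ctx (S : Signature) : Type := ∀ u : S.exo, S.exoRange u

/-- An assignment of values to the endogenous variables. -/
abbrev Signature.Asgn (S : Signature) : Type := ∀ X : S.endo, S.range X

/-- An intervention `Y⃗ ← y⃗`: a partial assignment of values to (distinct)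
endogenous variables. -/
abbrev Signature.Intervention (S : Signature) : Type := ∀ X : S.endo, Option (S.range X)

/-- The primitive propositions Φ_S : propositions `X = x` for `X ∈ V`, `x ∈ R(X)`. -/
abbrev Signature.Atom (S : Signature) : Type := Σ X : S.endo, S.range X

/-! ## Counterfactual structures -/

/-- A counterfactual structure over the primitive propositions `Φ`:
a finite set of worlds, a valuation, and a ternary relation `R`,
where `R w u v` means `u ⪯_w v`. -/
structure CStruct (Φ : Type) where
  World : Type
  worldFin : Fintype World
  val : World → Φ → Prop
  R : World → World → World → Prop
  self_mem : ∀ w, ∃ v, R w w v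
  refl_on : ∀ w u, (∃ v, R w u v) → R w u u
  trans_on : ∀ w u v x, (∃ y, R w u y) → (∃ y, R w v y) → (∃ y, R w x y) →
    R w u v → R w v x → R w u x
  centered : ∀ w u, u ≠ w → (R w w u ∧ ¬ R w u w)

attribute [instance] CStruct.worldFin

namespace CStruct

variable {Φ : Type} (M : CStruct Φ)

/-- `u ∈ W_w` : `u ⪯_w v` for some `v`. -/
def inW (w u : M.World) : Prop := ∃ v, M.R w u v

/-- `u ≺_w v` : `u ⪯_w v` and not `v ⪯_w u`. -/
def lt (w u v : M.World) : Prop := M.R w u v ∧ ¬ M.R w v u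

/-- The set of worlds in `W_w` satisfying `A` that are closest to `w`. -/
def closest (w : M.World) (A : M.World → Prop) : Set M.World :=
  {v | M.inW w v ∧ A v ∧ ∀ v', A v' → ¬ M.lt w v' v}

/-- `(M,w) ⊨ A > B` : every closest world to `w` satisfying `A` satisfies `B`. -/
def cfSat (w : M.World) (A B : M.World → Prop) : Prop :=
  ∀ v ∈ M.closest w A, B v

/-- Membership in `M⁺`: each `≺_w` is a strict total order on `W_w`. -/
def totalOrd : Prop :=
  ∀ w u v, M.inW w u → M.inW w v → u ≠ v → M.lt w u v ∨ M.lt w v u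

end CStruct

/-! ## Acceptable and full structures over Φ_S -/

/-- At every world, for each variable `X` exactly one proposition `X = x` is true. -/
def Acceptable (S : Signature) (M : CStruct S.Atom) : Prop :=
  ∀ (w : M.World) (X : S.endo), ∃! x : S.range X, M.val w ⟨X, x⟩

/-- Every assignment of values to the endogenous variables is realized at some
world of `W_w`, for every world `w`. -/
def Full (S : Signature) (M : CStruct S.Atom) : Prop :=
  ∀ (w : M.World) (a : S.Asgn), ∃ v, M.inW w v ∧ ∀ X : S.endo, M.val v ⟨X, a X⟩

/-- The antecedent `Y⃗ = y⃗` (a conjunction of atoms) of the counterfactual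
corresponding to the intervention `g`, as a predicate on worlds. -/
def intAnte (S : Signature) (M : CStruct S.Atom) (g : S.Intervention) :
    M.World → Prop :=
  fun v => ∀ (Y : S.endo) (y : S.range Y), g Y = some y → M.val v ⟨Y, y⟩

/-- `(M,w) ⊨ [Y⃗ ← y⃗](X = x)`, read as the counterfactual
`(Y₁ = y₁ ∧ ... ∧ Y_k = y_k) > (X = x)`. -/
def satBasic (S : Signature) (M : CStruct S.Atom) (w : M.World)
    (g : S.Intervention) (X : S.endo) (x : S.range X) : Prop :=
  M.cfSat w (intAnte S M g) (fun v => M.val v ⟨X, x⟩)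

/-- Recursive counterfactual structures `Mrec(Φ_S)`: full acceptable structures in
`M⁺` such that for each world there is a strict total order `≺` on the endogenous
variables such that if `W' ≺ Y` then setting `Y` (in addition to `X⃗`) does not
change the value of `W'` at the closest world. -/
def MRec (S : Signature) (M : CStruct S.Atom) : Prop :=
  Acceptable S M ∧ Full S M ∧ M.totalOrd ∧
  ∀ w : M.World, ∃ vlt : S.endo → S.endo → Prop, IsStrictTotalOrder S.endo vlt ∧
    ∀ W' Y : S.endo, vlt W' Y →
      ∀ g : S.Intervention, g W' = none → g Y = none →
        ∀ (y : S.range Y) (w' : S.range W'),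
          (satBasic S M w (Function.update g Y (some y)) W' w' ↔ satBasic S M w g W' w')

/-! ## Causal models -/

/-- A causal model over `S`: for each endogenous variable `X`, a structural
equation `F_X` mapping the values of all the other variables to a value of `X`. -/
structure CausalModel (S : Signature) where
  F : ∀ X : S.endo, S.Ctx → (∀ Y : {Y : S.endo // Y ≠ X}, S.range Y.1) → S.range X

namespace CausalModel

variable {S : Signature}

/-- `a` is a solution of the equations of `T_{g}` in context `u`. -/
def isSolution (T : CausalModel S) (g : S.Intervention) (u : S.Ctx) (a : S.Asgn) : Prop :=
  ∀ X : S.endo,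
    (∀ x : S.range X, g X = some x → a X = x) ∧
    (g X = none → a X = T.F X u (fun Y => a Y.1))

/-- `T` is recursive (acyclic): membership in `Trec(S)`. -/
def Recursive (T : CausalModel S) : Prop :=
  ∃ vlt : S.endo → S.endo → Prop, IsStrictTotalOrder S.endo vlt ∧
    ∀ X Y : S.endo, vlt X Y →
      ∀ (u : S.Ctx) (a a' : ∀ Z : {Z : S.endo // Z ≠ X}, S.range Z.1),
        (∀ Z : {Z : S.endo // Z ≠ X}, Z.1 ≠ Y → a Z = a' Z) →
        T.F X u a = T.F X u a'

/-- Membership in `Tun(S)`: all the equations of every `T_{X⃗ ← x⃗}` have a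
unique solution in every context. -/
def UniqueSolutions (T : CausalModel S) : Prop :=
  ∀ (g : S.Intervention) (u : S.Ctx), ∃! a : S.Asgn, T.isSolution g u a

end CausalModel

/-! ## The language Lprop(S) -/

/-- `Lprop(S)`: Boolean combinations of basic formulas `[Y⃗ ← y⃗](X = x)`. -/
inductive LProp (S : Signature) : Type
  | basic (g : S.Intervention) (X : S.endo) (x : S.range X) : LProp S
  | neg : LProp S → LProp S
  | and : LProp S → LProp S → LProp S

/-- Satisfaction of `Lprop(S)` formulas in a causal model, relative to a context. -/
def CausalModel.sat {S : Signature} (T : CausalModel S) (u : S.Ctx) : LProp S → Prop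
  | .basic g X x => ∀ a : S.Asgn, T.isSolution g u a → a X = x
  | .neg φ => ¬ CausalModel.sat T u φ
  | .and φ ψ => CausalModel.sat T u φ ∧ CausalModel.sat T u ψ

/-- Satisfaction of `Lprop(S)` formulas in a counterfactual structure over `Φ_S`. -/
def satL {S : Signature} (M : CStruct S.Atom) (w : M.World) : LProp S → Prop
  | .basic g X x => satBasic S M w g X x
  | .neg φ => ¬ satL M w φ
  | .and φ ψ => satL M w φ ∧ satL M w ψ

namespace LProp

variable {S : Signature}

def imp (φ ψ : LProp S) : LProp S := .neg (.and φ (.neg ψ))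

def or (φ ψ : LProp S) : LProp S := .neg (.and (.neg φ) (.neg ψ))

/-- Boolean evaluation of a formula treating the basic formulas as atoms. -/
def evalB (v : LProp S → Prop) : LProp S → Prop
  | .neg φ => ¬ evalB v φ
  | .and φ ψ => evalB v φ ∧ evalB v ψ
  | .basic g X x => v (.basic g X x)

/-- Instances of propositional tautologies in `Lprop(S)`. -/
def Taut (φ : LProp S) : Prop := ∀ v : LProp S → Prop, evalB v φ

/-- Disjunction of a nonempty list of formulas. -/
def bigOrNe : LProp S → List (LProp S) → LProp S
  | φ, [] => φ
  | φ, ψ :: l => or φ (bigOrNe ψ l)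

end LProp

/-- The proof system AXun(S): C0 (propositional tautologies), C1 (equality),
C2 (definiteness), C3 (composition), C4 (effectiveness), C5 (reversibility),
with modus ponens. -/
inductive AXunProv (S : Signature) : LProp S → Prop
  | taut {φ : LProp S} : LProp.Taut φ → AXunProv S φ
  | c1 (g : S.Intervention) (X : S.endo) (x x' : S.range X) (h : x ≠ x') :
      AXunProv S (LProp.imp (.basic g X x) (.neg (.basic g X x')))
  | c2 (g : S.Intervention) (X : S.endo) (x0 : S.range X) (l : List (S.range X))
      (h : x0 :: l = (Finset.univ : Finset (S.range X)).toList) :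
      AXunProv S (LProp.bigOrNe (.basic g X x0) (l.map (fun x => LProp.basic g X x)))
  | c3 (g : S.Intervention) (W : S.endo) (w : S.range W) (Y : S.endo) (y : S.range Y)
      (hW : g W = none) :
      AXunProv S (LProp.imp (.and (.basic g W w) (.basic g Y y))
        (.basic (Function.update g W (some w)) Y y))
  | c4 (g : S.Intervention) (X : S.endo) (x : S.range X) (h : g X = some x) :
      AXunProv S (.basic g X x)
  | c5 (g : S.Intervention) (W : S.endo) (w : S.range W) (Y : S.endo) (y : S.range Y)
      (hne : Y ≠ W) (hW : g W = none) (hY : g Y = none) :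
      AXunProv S (LProp.imp
        (.and (.basic (Function.update g W (some w)) Y y)
              (.basic (Function.update g Y (some y)) W w))
        (.basic g Y y))
  | mp {φ ψ : LProp S} : AXunProv S (LProp.imp φ ψ) → AXunProv S φ → AXunProv S ψ

/-! ## The language Lex(S) -/

/-- Boolean combinations of atoms `X = x`. -/
inductive BForm (S : Signature) : Type
  | atom (X : S.endo) (x : S.range X) : BForm S
  | neg : BForm S → BForm S
  | and : BForm S → BForm S → BForm S

def BForm.holds {S : Signature} (a : S.Asgn) : BForm S → Prop
  | .atom X x => a X = x
  | .neg φ => ¬ BForm.holds a φ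
  | .and φ ψ => BForm.holds a φ ∧ BForm.holds a ψ

/-- `Lex(S)`: Boolean combinations of basic formulas `[Y⃗ ← y⃗]ψ`, where `ψ` is a
Boolean combination of atoms. -/
inductive LEx (S : Signature) : Type
  | basic (g : S.Intervention) (ψ : BForm S) : LEx S
  | neg : LEx S → LEx S
  | and : LEx S → LEx S → LEx S

/-- Satisfaction of `Lex(S)` formulas in a causal model, relative to a context. -/
def CausalModel.satEx {S : Signature} (T : CausalModel S) (u : S.Ctx) : LEx S → Prop
  | .basic g ψ => ∀ a : S.Asgn, T.isSolution g u a → ψ.holds a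
  | .neg φ => ¬ CausalModel.satEx T u φ
  | .and φ ψ => CausalModel.satEx T u φ ∧ CausalModel.satEx T u ψ

/-! ## The counterfactual language L^C(Φ) and the system AX -/

/-- The language `L^C(Φ)`: primitive propositions closed under `∧`, `¬` and the
counterfactual connective `>` (`cf`). -/
inductive CForm (Φ : Type) : Type
  | atom : Φ → CForm Φ
  | fls : CForm Φ
  | neg : CForm Φ → CForm Φ
  | and : CForm Φ → CForm Φ → CForm Φ
  | cf : CForm Φ → CForm Φ → CForm Φ

namespace CForm

variable {Φ : Type}

def tr : CForm Φ := neg fls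

def or (φ ψ : CForm Φ) : CForm Φ := neg (and (neg φ) (neg ψ))

def imp (φ ψ : CForm Φ) : CForm Φ := or (neg φ) ψ

def iff (φ ψ : CForm Φ) : CForm Φ := and (imp φ ψ) (imp ψ φ)

/-- Boolean evaluation treating atoms and counterfactuals as atomic. -/
def evalB (v : CForm Φ → Prop) : CForm Φ → Prop
  | fls => False
  | neg φ => ¬ evalB v φ
  | and φ ψ => evalB v φ ∧ evalB v ψ
  | atom p => v (atom p)
  | cf φ ψ => v (cf φ ψ)

/-- Instances of propositional tautologies in `L^C(Φ)`. -/
def Taut (φ : CForm Φ) : Prop := ∀ v : CForm Φ → Prop, evalB v φ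

def bigAnd : List (CForm Φ) → CForm Φ
  | [] => tr
  | [φ] => φ
  | φ :: l => and φ (bigAnd l)

def bigOr : List (CForm Φ) → CForm Φ
  | [] => fls
  | [φ] => φ
  | φ :: l => or φ (bigOr l)

end CForm

/-- Provability in the system AX (axioms A0–A6, rules MP, RA1, RA2), augmented
with an arbitrary set `extra` of additional axioms. -/
inductive AXProv (Φ : Type) (extra : CForm Φ → Prop) : CForm Φ → Prop
  | taut {φ} : CForm.Taut φ → AXProv Φ extra φ
  | ax {φ} : extra φ → AXProv Φ extra φ
  | a1 (φ) : AXProv Φ extra (CForm.cf φ φ)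
  | a2 (φ ψ1 ψ2) : AXProv Φ extra
      (CForm.imp (CForm.and (CForm.cf φ ψ1) (CForm.cf φ ψ2)) (CForm.cf φ (CForm.and ψ1 ψ2)))
  | a3 (φ1 φ2 ψ) : AXProv Φ extra
      (CForm.imp (CForm.and (CForm.cf φ1 φ2) (CForm.cf φ1 ψ)) (CForm.cf (CForm.and φ1 φ2) ψ))
  | a4 (φ1 φ2 ψ) : AXProv Φ extra
      (CForm.imp (CForm.and (CForm.cf φ1 ψ) (CForm.cf φ2 ψ)) (CForm.cf (CForm.or φ1 φ2) ψ))
  | a5 : AXProv Φ extra (CForm.neg (CForm.cf CForm.tr CForm.fls))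
  | a6 (φ ψ) : AXProv Φ extra (CForm.imp φ (CForm.iff ψ (CForm.cf φ ψ)))
  | mp {φ ψ} : AXProv Φ extra (CForm.imp φ ψ) → AXProv Φ extra φ → AXProv Φ extra ψ
  | ra1 {φ φ' ψ} : AXProv Φ extra (CForm.iff φ φ') →
      AXProv Φ extra (CForm.imp (CForm.cf φ ψ) (CForm.cf φ' ψ))
  | ra2 {ψ ψ' φ} : AXProv Φ extra (CForm.imp ψ ψ') →
      AXProv Φ extra (CForm.imp (CForm.cf φ ψ) (CForm.cf φ ψ'))

/-- The axiom scheme A7. -/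
def A7Scheme (Φ : Type) : CForm Φ → Prop := fun θ =>
  ∃ φ ψ1 ψ2 : CForm Φ, θ = CForm.imp (CForm.cf φ (CForm.or ψ1 ψ2))
    (CForm.or (CForm.cf φ ψ1) (CForm.cf φ ψ2))

/-- Satisfaction of `L^C(Φ)` formulas in a counterfactual structure. -/
def CStruct.satC {Φ : Type} (M : CStruct Φ) : M.World → CForm Φ → Prop
  | w, .atom p => M.val w p
  | _, .fls => False
  | w, .neg φ => ¬ CStruct.satC M w φ
  | w, .and φ ψ => CStruct.satC M w φ ∧ CStruct.satC M w ψ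
  | w, .cf φ ψ => ∀ v ∈ M.closest w (fun u => CStruct.satC M u φ), CStruct.satC M v ψ

/-! ## The signature with three binary endogenous variables -/

/-- The signature with endogenous variables `V = {X1, X2, X3}` (as `Fin 3`), each
with range `{0, 1}` (as `Fin 2`), and an arbitrary exogenous part. -/
abbrev S3 (E : Type) (eF : Fintype E) (er : E → Type)
    (erF : ∀ e, Fintype (er e)) (erN : ∀ e, Nonempty (er e)) : Signature :=
  { exo := E
    endo := Fin 3
    exoFin := eF
    endoFin := inferInstance
    endoDec := inferInstance
    exoRange := er
    range := fun _ => Fin 2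
    exoRangeFin := erF
    rangeFin := fun _ => inferInstance
    exoRangeNe := erN
    rangeNe := fun _ => ⟨0⟩ }

/-- The intervention `Xi ← 1`. -/
def gI {E : Type} {eF : Fintype E} {er : E → Type}
    {erF : ∀ e, Fintype (er e)} {erN : ∀ e, Nonempty (er e)}
    (i : Fin 3) : (S3 E eF er erF erN).Intervention :=
  fun j => if j = i then some (1 : Fin 2) else none

/-- The intervention `Xi ← 1; Xj ← 1`. -/
def gII {E : Type} {eF : Fintype E} {er : E → Type}
    {erF : ∀ e, Fintype (er e)} {erN : ∀ e, Nonempty (er e)}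
    (i j : Fin 3) : (S3 E eF er erF erN).Intervention :=
  fun k => if k = i ∨ k = j then some (1 : Fin 2) else none

/-- The formula φ : `[X1←1](X2 = 1) ∧ [X1←1](X3 = 0) ∧ [X2←1](X3 = 1) ∧
[X2←1](X1 = 0) ∧ [X3←1](X1 = 1) ∧ [X3←1](X2 = 0)`. -/
def phi3 {E : Type} {eF : Fintype E} {er : E → Type}
    {erF : ∀ e, Fintype (er e)} {erN : ∀ e, Nonempty (er e)} :
    LProp (S3 E eF er erF erN) :=
  .and (.basic (gI 0) 1 1) <| .and (.basic (gI 0) 2 0) <| .and (.basic (gI 1) 2 1) <|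
    .and (.basic (gI 1) 0 0) <| .and (.basic (gI 2) 0 1) (.basic (gI 2) 1 0)

/-! ## Auxiliary development for stmt9 -/

namespace Stmt9

attribute [local instance] Classical.propDecidable

variable {S : Signature}

section SolTheory

variable (T : CausalModel S) (vlt : S.endo → S.endo → Prop)
  (hST : IsStrictTotalOrder S.endo vlt)
  (hrec : ∀ X Y : S.endo, vlt X Y →
      ∀ (u : S.Ctx) (a a' : ∀ Z : {Z : S.endo // Z ≠ X}, S.range Z.1),
        (∀ Z : {Z : S.endo // Z ≠ X}, Z.1 ≠ Y → a Z = a' Z) →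
        T.F X u a = T.F X u a')

include hST

theorem wfv : WellFounded vlt := by
  haveI := hST
  exact Finite.wellFounded_of_trans_of_irrefl vlt

theorem vlt_irr (X : S.endo) : ¬ vlt X X := by
  haveI := hST; exact irrefl_of vlt X

theorem vlt_tr {X Y Z : S.endo} (h1 : vlt X Y) (h2 : vlt Y Z) : vlt X Z := by
  haveI := hST; exact trans_of vlt h1 h2

theorem vlt_tri (X Y : S.endo) : vlt X Y ∨ X = Y ∨ vlt Y X := by
  haveI := hST; exact trichotomous_of vlt X Y

theorem vlt_asymm {X Y : S.endo} (h : vlt X Y) : ¬ vlt Y X :=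
  fun h' => vlt_irr vlt hST X (vlt_tr vlt hST h h')

include hrec in
/-- `F X` depends only on the variables `≺ X`. -/
theorem indep (X : S.endo) (u : S.Ctx) :
    ∀ (c c' : ∀ Z : {Z : S.endo // Z ≠ X}, S.range Z.1),
      (∀ Z : {Z : S.endo // Z ≠ X}, vlt Z.1 X → c Z = c' Z) →
      T.F X u c = T.F X u c' := by
  suffices H : ∀ (n : ℕ) (c c' : ∀ Z : {Z : S.endo // Z ≠ X}, S.range Z.1),
      (Finset.univ.filter (fun Z => c Z ≠ c' Z)).card ≤ n →
      (∀ Z : {Z : S.endo // Z ≠ X}, vlt Z.1 X → c Z = c' Z) →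
      T.F X u c = T.F X u c' by
    intro c c' h
    exact H _ c c' le_rfl h
  intro n
  induction n with
  | zero =>
    intro c c' hcard h
    have : c = c' := by
      funext Z
      by_contra hne
      have : Z ∈ Finset.univ.filter (fun Z => c Z ≠ c' Z) := by
        simp [hne]
      simpa using Finset.card_pos.mpr ⟨Z, this⟩ |>.trans_le hcard
    rw [this]
  | succ n ih =>
    intro c c' hcard h
    by_cases hemp : ∀ Z : {Z : S.endo // Z ≠ X}, c Z = c' Z
    · rw [funext hemp]
    · push_neg at hemp
      obtain ⟨Z₀, hZ₀⟩ := hemp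
      have hnlt : ¬ vlt Z₀.1 X := fun hl => hZ₀ (h Z₀ hl)
      have hXZ : vlt X Z₀.1 := by
        rcases vlt_tri vlt hST X Z₀.1 with h1 | h1 | h1
        · exact h1
        · exact absurd h1.symm Z₀.2
        · exact absurd h1 hnlt
      set c'' := Function.update c Z₀ (c' Z₀) with hc''
      have step : T.F X u c = T.F X u c'' := by
        apply hrec X Z₀.1 hXZ u
        intro Z hZ
        have hne : Z ≠ Z₀ := fun he => hZ (by rw [he])
        simp [hc'', Function.update_of_ne hne]
      rw [step]
      apply ih
      · have hsub : (Finset.univ.filter (fun Z => c'' Z ≠ c' Z)) ⊆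
            (Finset.univ.filter (fun Z => c Z ≠ c' Z)).erase Z₀ := by
          intro Z hZ
          simp only [Finset.mem_filter, Finset.mem_univ, true_and] at hZ
          have hne : Z ≠ Z₀ := by
            intro he; subst he; simp [hc''] at hZ
          rw [Finset.mem_erase]
          refine ⟨hne, ?_⟩
          simp only [Finset.mem_filter, Finset.mem_univ, true_and]
          simpa [hc'', Function.update_of_ne hne] using hZ
        have h1 := Finset.card_le_card hsub
        have h2 : Z₀ ∈ Finset.univ.filter (fun Z => c Z ≠ c' Z) := by simp [hZ₀]
        have h3 := Finset.card_erase_of_mem h2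
        omega
      · intro Z hZ
        by_cases hne : Z = Z₀
        · subst hne; simp [hc'']
        · simp [hc'', Function.update_of_ne hne, h Z hZ]

/-- The canonical solution, defined by well-founded recursion along `vlt`. -/
noncomputable def sol (u : S.Ctx) (g : S.Intervention) : S.Asgn :=
  (wfv vlt hST).fix (fun X ih =>
    match g X with
    | some x => x
    | none => T.F X u fun Z =>
        if h : vlt Z.1 X then ih Z.1 h else Classical.choice (S.rangeNe Z.1))

theorem sol_eq (u : S.Ctx) (g : S.Intervention) (X : S.endo) :
    sol T vlt hST u g X =
      match g X with
      | some x => x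
      | none => T.F X u fun Z =>
          if h : vlt Z.1 X then sol T vlt hST u g Z.1
          else Classical.choice (S.rangeNe Z.1) := by
  conv_lhs => rw [sol, WellFounded.fix_eq]
  rfl

theorem sol_some (u : S.Ctx) (g : S.Intervention) {X : S.endo} {x : S.range X}
    (h : g X = some x) : sol T vlt hST u g X = x := by
  rw [sol_eq, h]

include hrec in
theorem sol_none (u : S.Ctx) (g : S.Intervention) {X : S.endo}
    (h : g X = none) :
    sol T vlt hST u g X = T.F X u (fun Z => sol T vlt hST u g Z.1) := by
  rw [sol_eq, h]
  apply indep T vlt hST hrec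
  intro Z hZ
  simp [hZ]

include hrec in
theorem isSolution_sol (u : S.Ctx) (g : S.Intervention) :
    T.isSolution g u (sol T vlt hST u g) := by
  intro X
  constructor
  · intro x hx; exact sol_some T vlt hST u g hx
  · intro hx; exact sol_none T vlt hST hrec u g hx

include hrec in
theorem sol_uniq (u : S.Ctx) (g : S.Intervention) {b : S.Asgn}
    (hb : T.isSolution g u b) : b = sol T vlt hST u g := by
  funext X
  induction X using WellFounded.induction (wfv vlt hST) with
  | _ X IH =>
    cases hgX : g X with
    | some x =>
      rw [(hb X).1 x hgX, sol_some T vlt hST u g hgX]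
    | none =>
      rw [(hb X).2 hgX, sol_none T vlt hST hrec u g hgX]
      apply indep T vlt hST hrec
      intro Z hZ
      exact IH Z.1 hZ

include hrec in
theorem existsUnique_sol (u : S.Ctx) (g : S.Intervention) :
    ∃! a : S.Asgn, T.isSolution g u a :=
  ⟨sol T vlt hST u g, isSolution_sol T vlt hST hrec u g,
    fun b hb => sol_uniq T vlt hST hrec u g hb⟩

include hrec in
/-- Stability: intervening on `Y` does not change the solution values of
variables `≺ Y`. -/
theorem sol_update (u : S.Ctx) (g : S.Intervention) (Y : S.endo)
    (y : S.range Y) :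
    ∀ Z : S.endo, vlt Z Y →
      sol T vlt hST u (Function.update g Y (some y)) Z = sol T vlt hST u g Z := by
  intro Z
  induction Z using WellFounded.induction (wfv vlt hST) with
  | _ Z IH =>
    intro hZY
    have hZne : Z ≠ Y := fun he => vlt_irr vlt hST Y (he ▸ hZY)
    have hupd : Function.update g Y (some y) Z = g Z :=
      Function.update_of_ne hZne _ g
    cases hgZ : g Z with
    | some z =>
      rw [sol_some T vlt hST u g hgZ, sol_some T vlt hST u _ (hupd.trans hgZ)]
    | none =>
      rw [sol_none T vlt hST hrec u g hgZ, sol_none T vlt hST hrec u _ (hupd.trans hgZ)]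
      apply indep T vlt hST hrec
      intro W hW
      exact IH W.1 hW (vlt_tr vlt hST hW hZY)

end SolTheory

section MtoT

variable (M : CStruct S.Atom)

theorem lt_irr (w v : M.World) : ¬ M.lt w v v := fun h => h.2 h.1

theorem lt_trans' {w a b c : M.World} (hc : M.inW w c)
    (h1 : M.lt w a b) (h2 : M.lt w b c) : M.lt w a c := by
  have ha : M.inW w a := ⟨_, h1.1⟩
  have hb : M.inW w b := ⟨_, h2.1⟩
  refine ⟨M.trans_on w a b c ha hb hc h1.1 h2.1, fun h => ?_⟩
  exact h2.2 (M.trans_on w c a b hc ha hb h h1.1)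

theorem exists_min (w : M.World) (A : M.World → Prop)
    (hA : ∃ v, M.inW w v ∧ A v) :
    ∃ m, M.inW w m ∧ A m ∧ ∀ v, A v → ¬ M.lt w v m := by
  let α := {v : M.World // M.inW w v ∧ A v}
  haveI : Finite α := Subtype.finite
  let r : α → α → Prop := fun x y => M.lt w x.1 y.1
  haveI : IsIrrefl α r := ⟨fun x => lt_irr M w x.1⟩
  haveI : IsTrans α r := ⟨fun x y z h1 h2 => lt_trans' M z.2.1 h1 h2⟩
  have wf : WellFounded r := Finite.wellFounded_of_trans_of_irrefl r
  obtain ⟨x, hx⟩ := hA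
  obtain ⟨m, -, hmin⟩ := wf.has_min Set.univ ⟨⟨x, hx⟩, trivial⟩
  refine ⟨m.1, m.2.1, m.2.2, fun v hv hlt => ?_⟩
  have hvW : M.inW w v := ⟨_, hlt.1⟩
  exact hmin ⟨v, hvW, hv⟩ trivial hlt

variable (hM : MRec S M) (w : M.World)

include hM

/-- Extend an intervention to a full assignment (arbitrarily). -/
noncomputable def extAsgn (g : S.Intervention) : S.Asgn :=
  fun X => (g X).getD (Classical.choice (S.rangeNe X))

theorem intAnte_nonempty (g : S.Intervention) :
    ∃ v, M.inW w v ∧ intAnte S M g v := by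
  obtain ⟨v, hvW, hvv⟩ := hM.2.1 w (extAsgn g)
  refine ⟨v, hvW, fun Y y hy => ?_⟩
  have : extAsgn g Y = y := by simp [extAsgn, hy]
  exact this ▸ hvv Y

/-- The closest world to `w` satisfying the intervention antecedent. -/
noncomputable def cw (g : S.Intervention) : M.World :=
  (exists_min M w (intAnte S M g) (intAnte_nonempty M hM w g)).choose

theorem cw_spec (g : S.Intervention) :
    M.inW w (cw M hM w g) ∧ intAnte S M g (cw M hM w g) ∧
      ∀ v, intAnte S M g v → ¬ M.lt w v (cw M hM w g) :=
  (exists_min M w (intAnte S M g) (intAnte_nonempty M hM w g)).choose_spec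

theorem closest_eq (g : S.Intervention) :
    M.closest w (intAnte S M g) = {cw M hM w g} := by
  obtain ⟨h1, h2, h3⟩ := cw_spec M hM w g
  ext v
  simp only [Set.mem_singleton_iff, CStruct.closest, Set.mem_setOf_eq]
  constructor
  · rintro ⟨hvW, hvA, hvmin⟩
    by_contra hne
    rcases hM.2.2.1 w v (cw M hM w g) hvW h1 hne with hlt | hlt
    · exact h3 v hvA hlt
    · exact hvmin _ h2 hlt
  · rintro rfl
    exact ⟨h1, h2, h3⟩

theorem satBasic_iff (g : S.Intervention) (X : S.endo) (x : S.range X) :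
    satBasic S M w g X x ↔ M.val (cw M hM w g) ⟨X, x⟩ := by
  unfold satBasic CStruct.cfSat
  rw [closest_eq M hM w g]
  simp

/-- The value of variable `X` at world `v`. -/
noncomputable def valOf (v : M.World) (X : S.endo) : S.range X :=
  (hM.1 v X).choose

theorem valOf_spec (v : M.World) (X : S.endo) : M.val v ⟨X, valOf M hM v X⟩ :=
  (hM.1 v X).choose_spec.1

theorem valOf_eq {v : M.World} {X : S.endo} {x : S.range X}
    (h : M.val v ⟨X, x⟩) : valOf M hM v X = x :=
  ((hM.1 v X).choose_spec.2 x h).symm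

theorem satBasic_iff' (g : S.Intervention) (X : S.endo) (x : S.range X) :
    satBasic S M w g X x ↔ valOf M hM (cw M hM w g) X = x := by
  rw [satBasic_iff M hM w g]
  constructor
  · exact fun h => valOf_eq M hM h
  · rintro rfl; exact valOf_spec M hM _ X

/-- Lemma A: strengthening an antecedent by the current value of an unset
variable does not change the closest world. -/
theorem cw_update_self (g : S.Intervention) {Y : S.endo} (hgY : g Y = none)
    {y : S.range Y} (hy : valOf M hM (cw M hM w g) Y = y) :
    cw M hM w (Function.update g Y (some y)) = cw M hM w g := by
  obtain ⟨h1, h2, h3⟩ := cw_spec M hM w g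
  have hA : intAnte S M (Function.update g Y (some y)) (cw M hM w g) := by
    intro Z z hz
    by_cases hZY : Z = Y
    · subst hZY
      rw [Function.update_self] at hz
      cases hz
      exact hy ▸ valOf_spec M hM _ Z
    · rw [Function.update_of_ne hZY] at hz
      exact h2 Z z hz
  have hsub : ∀ v, intAnte S M (Function.update g Y (some y)) v →
      intAnte S M g v := by
    intro v hv Z z hz
    have hZY : Z ≠ Y := fun he => by subst he; rw [hgY] at hz; cases hz
    exact hv Z z (by rw [Function.update_of_ne hZY]; exact hz)
  have : cw M hM w g ∈ M.closest w (intAnte S M (Function.update g Y (some y))) := by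
    exact ⟨h1, hA, fun v' hv' => h3 v' (hsub v' hv')⟩
  rw [closest_eq M hM w _] at this
  exact this.symm

variable (vlt : S.endo → S.endo → Prop) (hST : IsStrictTotalOrder S.endo vlt)
  (hRw : ∀ W' Y : S.endo, vlt W' Y →
      ∀ g : S.Intervention, g W' = none → g Y = none →
        ∀ (y : S.range Y) (w' : S.range W'),
          (satBasic S M w (Function.update g Y (some y)) W' w' ↔ satBasic S M w g W' w'))

include hRw in
/-- Lemma B: the value of `W' ≺ Y` at the closest world is unaffected by an
extra intervention on `Y`. -/
theorem cw_update_val {W' Y : S.endo} (hWY : vlt W' Y) (g : S.Intervention)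
    (hgW : g W' = none) (hgY : g Y = none) (y : S.range Y) :
    valOf M hM (cw M hM w (Function.update g Y (some y))) W' =
      valOf M hM (cw M hM w g) W' := by
  have := (hRw W' Y hWY g hgW hgY y (valOf M hM (cw M hM w g) W')).mpr
  rw [satBasic_iff' M hM w, satBasic_iff' M hM w] at this
  exact this rfl

include hST hRw in
/-- Lemma C: the value of `X` at the closest world depends only on the
interventions on variables `≺ X`. -/
theorem cw_strip (g : S.Intervention) (X : S.endo) (hgX : g X = none) :
    valOf M hM (cw M hM w g) X =
      valOf M hM (cw M hM w (fun Z => if vlt Z X then g Z else none)) X := by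
  suffices H : ∀ (n : ℕ) (g : S.Intervention), g X = none →
      (Finset.univ.filter (fun Z => ¬ vlt Z X ∧ (g Z).isSome)).card ≤ n →
      valOf M hM (cw M hM w g) X =
        valOf M hM (cw M hM w (fun Z => if vlt Z X then g Z else none)) X by
    exact H _ g hgX le_rfl
  intro n
  induction n with
  | zero =>
    intro g hgX hcard
    have : g = (fun Z => if vlt Z X then g Z else none) := by
      funext Z
      by_cases hZ : vlt Z X
      · simp [hZ]
      · rw [if_neg hZ]
        cases hgZ : g Z with
        | none => rfl
        | some z =>
          exfalso
          have : Z ∈ Finset.univ.filter (fun Z => ¬ vlt Z X ∧ (g Z).isSome) := by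
            simp [hZ, hgZ]
          simpa using (Finset.card_pos.mpr ⟨Z, this⟩).trans_le hcard
    conv_lhs => rw [this]
  | succ n ih =>
    intro g hgX hcard
    by_cases hemp : (Finset.univ.filter (fun Z => ¬ vlt Z X ∧ (g Z).isSome)) = ∅
    · have : g = (fun Z => if vlt Z X then g Z else none) := by
        funext Z
        by_cases hZ : vlt Z X
        · simp [hZ]
        · rw [if_neg hZ]
          cases hgZ : g Z with
          | none => rfl
          | some z =>
            exact absurd (Finset.eq_empty_iff_forall_notMem.mp hemp Z (by simp [hZ, hgZ]))
              (fun h => h)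
      conv_lhs => rw [this]
    · obtain ⟨Y, hY⟩ := Finset.nonempty_iff_ne_empty.mpr hemp
      simp only [Finset.mem_filter, Finset.mem_univ, true_and] at hY
      obtain ⟨hYnlt, hYsome⟩ := hY
      obtain ⟨y, hy⟩ := Option.isSome_iff_exists.mp hYsome
      have hYX : Y ≠ X := fun he => by subst he; rw [hgX] at hy; cases hy
      have hXY : vlt X Y := by
        rcases vlt_tri vlt hST X Y with h1 | h1 | h1
        · exact h1
        · exact absurd h1.symm hYX
        · exact absurd h1 hYnlt
      set g₀ : S.Intervention := Function.update g Y none with hg₀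
      have hgeq : g = Function.update g₀ Y (some y) := by
        funext Z
        by_cases hZ : Z = Y
        · subst hZ; simp [hg₀, hy]
        · simp [hg₀, Function.update_of_ne hZ]
      have hXneY : X ≠ Y := fun he => vlt_irr vlt hST Y (he ▸ hXY)
      have hg₀X : g₀ X = none := by
        rw [hg₀, Function.update_of_ne hXneY]; exact hgX
      have hg₀Y : g₀ Y = none := by simp [hg₀]
      have step : valOf M hM (cw M hM w g) X = valOf M hM (cw M hM w g₀) X := by
        conv_lhs => rw [hgeq]
        exact cw_update_val M hM w vlt hRw hXY g₀ hg₀X hg₀Y y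
      rw [step]
      have hres : (fun Z => if vlt Z X then g₀ Z else none) =
          (fun Z => if vlt Z X then g Z else none) := by
        funext Z
        by_cases hZ : vlt Z X
        · have hZY : Z ≠ Y := fun he => hYnlt (he ▸ hZ)
          simp [hZ, hg₀, Function.update_of_ne hZY]
        · simp [hZ]
      rw [← hres]
      apply ih g₀ hg₀X
      have hsub : (Finset.univ.filter (fun Z => ¬ vlt Z X ∧ (g₀ Z).isSome)) ⊆
          (Finset.univ.filter (fun Z => ¬ vlt Z X ∧ (g Z).isSome)).erase Y := by
        intro Z hZ
        simp only [Finset.mem_filter, Finset.mem_univ, true_and] at hZ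
        have hZY : Z ≠ Y := by
          intro he; subst he; rw [hg₀Y] at hZ; simp at hZ
        rw [Finset.mem_erase]
        refine ⟨hZY, ?_⟩
        simp only [Finset.mem_filter, Finset.mem_univ, true_and]
        rw [hg₀, Function.update_of_ne hZY] at hZ
        exact hZ
      have h1 := Finset.card_le_card hsub
      have h2 : Y ∈ Finset.univ.filter (fun Z => ¬ vlt Z X ∧ (g Z).isSome) := by
        simp [hYnlt, hYsome]
      have h3 := Finset.card_erase_of_mem h2
      omega

include hST in
/-- Lemma D: extend `g` below `X` by the values at the closest world, without
changing the closest world. -/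
theorem cw_fill (g : S.Intervention) (X : S.endo) (hgX : g X = none) :
    ∃ g' : S.Intervention, cw M hM w g' = cw M hM w g ∧ g' X = none ∧
      (∀ Z, vlt Z X → g' Z = some (valOf M hM (cw M hM w g) Z)) ∧
      (∀ Z, ¬ vlt Z X → g' Z = g Z) := by
  suffices H : ∀ (n : ℕ) (g : S.Intervention), g X = none →
      (Finset.univ.filter (fun Z => vlt Z X ∧ g Z = none)).card ≤ n →
      ∃ g' : S.Intervention, cw M hM w g' = cw M hM w g ∧ g' X = none ∧
        (∀ Z, vlt Z X → g' Z = some (valOf M hM (cw M hM w g) Z)) ∧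
        (∀ Z, ¬ vlt Z X → g' Z = g Z) by
    exact H _ g hgX le_rfl
  intro n
  induction n with
  | zero =>
    intro g hgX hcard
    refine ⟨g, rfl, hgX, fun Z hZ => ?_, fun Z _ => rfl⟩
    cases hgZ : g Z with
    | none =>
      exfalso
      have : Z ∈ Finset.univ.filter (fun Z => vlt Z X ∧ g Z = none) := by
        simp [hZ, hgZ]
      simpa using (Finset.card_pos.mpr ⟨Z, this⟩).trans_le hcard
    | some z =>
      have : M.val (cw M hM w g) ⟨Z, z⟩ := (cw_spec M hM w g).2.1 Z z hgZ
      rw [valOf_eq M hM this]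
  | succ n ih =>
    intro g hgX hcard
    by_cases hemp : (Finset.univ.filter (fun Z => vlt Z X ∧ g Z = none)) = ∅
    · refine ⟨g, rfl, hgX, fun Z hZ => ?_, fun Z _ => rfl⟩
      cases hgZ : g Z with
      | none =>
        exact absurd (Finset.eq_empty_iff_forall_notMem.mp hemp Z
          (by simp [hZ, hgZ])) (fun h => h)
      | some z =>
        have : M.val (cw M hM w g) ⟨Z, z⟩ := (cw_spec M hM w g).2.1 Z z hgZ
        rw [valOf_eq M hM this]
    · obtain ⟨Y, hY⟩ := Finset.nonempty_iff_ne_empty.mpr hemp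
      simp only [Finset.mem_filter, Finset.mem_univ, true_and] at hY
      obtain ⟨hYX, hgY⟩ := hY
      set g₁ : S.Intervention :=
        Function.update g Y (some (valOf M hM (cw M hM w g) Y)) with hg₁
      have hYneX : Y ≠ X := fun he => vlt_irr vlt hST X (he ▸ hYX)
      have hcw1 : cw M hM w g₁ = cw M hM w g := cw_update_self M hM w g hgY rfl
      have hg₁X : g₁ X = none := by
        rw [hg₁, Function.update_of_ne (Ne.symm hYneX)]; exact hgX
      have hcard1 : (Finset.univ.filter (fun Z => vlt Z X ∧ g₁ Z = none)).card ≤ n := by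
        have hsub : (Finset.univ.filter (fun Z => vlt Z X ∧ g₁ Z = none)) ⊆
            (Finset.univ.filter (fun Z => vlt Z X ∧ g Z = none)).erase Y := by
          intro Z hZ
          simp only [Finset.mem_filter, Finset.mem_univ, true_and] at hZ
          have hZY : Z ≠ Y := by
            intro he; subst he
            rw [hg₁, Function.update_self] at hZ
            cases hZ.2
          rw [Finset.mem_erase]
          refine ⟨hZY, ?_⟩
          simp only [Finset.mem_filter, Finset.mem_univ, true_and]
          rw [hg₁, Function.update_of_ne hZY] at hZ
          exact hZ
        have h1 := Finset.card_le_card hsub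
        have h2 : Y ∈ Finset.univ.filter (fun Z => vlt Z X ∧ g Z = none) := by
          simp [hYX, hgY]
        have h3 := Finset.card_erase_of_mem h2
        omega
      obtain ⟨g', hcw', hg'X, hbelow, habove⟩ := ih g₁ hg₁X hcard1
      refine ⟨g', by rw [hcw', hcw1], hg'X, fun Z hZ => ?_, fun Z hZ => ?_⟩
      · rw [hbelow Z hZ, hcw1]
      · rw [habove Z hZ, hg₁]
        have hZY : Z ≠ Y := fun he => hZ (he ▸ hYX)
        rw [Function.update_of_ne hZY]

/-- The causal model induced by a recursive counterfactual structure at `w`. -/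
noncomputable def buildT : CausalModel S :=
  ⟨fun X _u vals =>
    valOf M hM (cw M hM w (fun Z =>
      if h : vlt Z X then some (vals ⟨Z, fun he => vlt_irr vlt hST X (he ▸ h)⟩)
      else none)) X⟩

theorem buildT_recursive : (buildT M hM w vlt hST).Recursive := by
  refine ⟨vlt, hST, fun X Y hXY u a a' ha => ?_⟩
  simp only [buildT]
  refine congrArg (fun v : M.World => valOf M hM v X) (congrArg (cw M hM w) ?_)
  funext Z
  by_cases h : vlt Z X
  · simp only [dif_pos h]
    have hZY : Z ≠ Y := fun he => vlt_irr vlt hST Y (vlt_tr vlt hST (he ▸ h) hXY)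
    exact congrArg some (ha ⟨Z, fun he => vlt_irr vlt hST X (he ▸ h)⟩ hZY)
  · simp only [dif_neg h]

include hRw in
theorem isSolution_valOf (u : S.Ctx) (g : S.Intervention) :
    (buildT M hM w vlt hST).isSolution g u (fun X => valOf M hM (cw M hM w g) X) := by
  intro X
  constructor
  · intro x hx
    exact valOf_eq M hM ((cw_spec M hM w g).2.1 X x hx)
  · intro hgX
    obtain ⟨g', hcw', hg'X, hbelow, -⟩ := cw_fill M hM w vlt hST g X hgX
    have hC := cw_strip M hM w vlt hST hRw g' X hg'X
    have hres : (fun Z => if vlt Z X then g' Z else none) =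
        (fun Z => if h : vlt Z X then
            some (valOf M hM (cw M hM w g) Z) else none) := by
      funext Z
      by_cases h : vlt Z X
      · rw [if_pos h, dif_pos h, hbelow Z h]
      · rw [if_neg h, dif_neg h]
    rw [hres] at hC
    rw [hcw'] at hC
    show valOf M hM (cw M hM w g) X = valOf M hM (cw M hM w _) X
    rw [hC]

include hRw in
theorem sat_iff_satL (u : S.Ctx) (ψ : LProp S) :
    (buildT M hM w vlt hST).sat u ψ ↔ satL M w ψ := by
  induction ψ with
  | basic g X x =>
    show (∀ a : S.Asgn, (buildT M hM w vlt hST).isSolution g u a → a X = x) ↔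
      satBasic S M w g X x
    rw [satBasic_iff' M hM w]
    constructor
    · intro h
      exact h _ (isSolution_valOf M hM w vlt hST hRw u g)
    · intro h a ha
      have hrec := (buildT_recursive M hM w vlt hST).choose_spec
      obtain ⟨vlt', hST', hrec'⟩ := buildT_recursive M hM w vlt hST
      have := sol_uniq (buildT M hM w vlt hST) vlt' hST' hrec' u g ha
      have h2 := sol_uniq (buildT M hM w vlt hST) vlt' hST' hrec' u g
        (isSolution_valOf M hM w vlt hST hRw u g)
      rw [this, ← h2]
      exact h
  | neg ψ ih => exact not_congr ih
  | and ψ1 ψ2 ih1 ih2 => exact and_congr ih1 ih2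

end MtoT

section TtoM

variable (T : CausalModel S) (vlt : S.endo → S.endo → Prop)
  (hST : IsStrictTotalOrder S.endo vlt)
  (hrec : ∀ X Y : S.endo, vlt X Y →
      ∀ (u : S.Ctx) (a a' : ∀ Z : {Z : S.endo // Z ≠ X}, S.range Z.1),
        (∀ Z : {Z : S.endo // Z ≠ X}, Z.1 ≠ Y → a Z = a' Z) →
        T.F X u a = T.F X u a')
  (u : S.Ctx)

/-- `X` deviates in `a` (relative to the base model `T` and context `u`). -/
def devBase (a : S.Asgn) (X : S.endo) : Prop :=
  a X ≠ T.F X u (fun Z => a Z.1)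

/-- The model `T` modified so that the deviating variables of the base world `a`
are fixed to their values in `a`. -/
noncomputable def Tmod (a : S.Asgn) : CausalModel S :=
  ⟨fun X u' vals => if devBase T u a X then a X else T.F X u' vals⟩

include hrec in
theorem Tmod_rec (a : S.Asgn) : ∀ X Y : S.endo, vlt X Y →
    ∀ (u' : S.Ctx) (c c' : ∀ Z : {Z : S.endo // Z ≠ X}, S.range Z.1),
      (∀ Z : {Z : S.endo // Z ≠ X}, Z.1 ≠ Y → c Z = c' Z) →
      (Tmod T u a).F X u' c = (Tmod T u a).F X u' c' := by
  intro X Y hXY u' c c' hc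
  simp only [Tmod]
  by_cases h : devBase T u a X
  · simp [h]
  · simp only [if_neg h]
    exact hrec X Y hXY u' c c' hc

theorem Tmod_sol_base (a : S.Asgn) :
    (Tmod T u a).isSolution (fun _ => none) u a := by
  intro X
  refine ⟨fun x hx => by simp at hx, fun _ => ?_⟩
  simp only [Tmod]
  by_cases h : devBase T u a X
  · simp [h]
  · simp only [if_neg h]
    exact not_not.mp h

/-- Deviation of `b` relative to the modified model at base `a`. -/
def Dev (a b : S.Asgn) (X : S.endo) : Prop :=
  b X ≠ (Tmod T u a).F X u (fun Z => b Z.1)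

/-- The strict order on worlds used at base world `a`. -/
def keyLt (a b c : S.Asgn) : Prop :=
  (∃ X, (¬ Dev T u a b X ∧ Dev T u a c X) ∧
    ∀ Y, vlt Y X → (Dev T u a b Y ↔ Dev T u a c Y)) ∨
  ((∀ X, Dev T u a b X ↔ Dev T u a c X) ∧ WellOrderingRel b c)

theorem keyLt_irr (a b : S.Asgn) : ¬ keyLt T vlt u a b b := by
  rintro (⟨X, ⟨h1, h2⟩, -⟩ | ⟨-, h⟩)
  · exact h1 h2
  · exact irrefl_of WellOrderingRel b h

include hST in
theorem keyLt_trans (a : S.Asgn) {b c d : S.Asgn}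
    (h1 : keyLt T vlt u a b c) (h2 : keyLt T vlt u a c d) :
    keyLt T vlt u a b d := by
  rcases h1 with ⟨X1, ⟨hb1, hc1⟩, hbel1⟩ | ⟨hiff1, hw1⟩
  · rcases h2 with ⟨X2, ⟨hc2, hd2⟩, hbel2⟩ | ⟨hiff2, hw2⟩
    · rcases vlt_tri vlt hST X1 X2 with hlt | heq | hlt
      · refine Or.inl ⟨X1, ⟨hb1, (hbel2 X1 hlt).mp hc1⟩, fun Y hY => ?_⟩
        exact (hbel1 Y hY).trans (hbel2 Y (vlt_tr vlt hST hY hlt))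
      · exact absurd hc1 (heq ▸ hc2)
      · refine Or.inl ⟨X2, ⟨fun h => hc2 ((hbel1 X2 hlt).mp h), hd2⟩, fun Y hY => ?_⟩
        exact (hbel1 Y (vlt_tr vlt hST hY hlt)).trans (hbel2 Y hY)
    · exact Or.inl ⟨X1, ⟨hb1, (hiff2 X1).mp hc1⟩,
        fun Y hY => (hbel1 Y hY).trans (hiff2 Y)⟩
  · rcases h2 with ⟨X2, ⟨hc2, hd2⟩, hbel2⟩ | ⟨hiff2, hw2⟩
    · exact Or.inl ⟨X2, ⟨fun h => hc2 ((hiff1 X2).mp h), hd2⟩,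
        fun Y hY => (hiff1 Y).trans (hbel2 Y hY)⟩
    · refine Or.inr ⟨fun X => (hiff1 X).trans (hiff2 X), ?_⟩
      haveI : IsTrans S.Asgn WellOrderingRel :=
        inferInstance
      exact trans_of WellOrderingRel hw1 hw2

include hST in
theorem keyLt_asymm (a : S.Asgn) {b c : S.Asgn} (h : keyLt T vlt u a b c) :
    ¬ keyLt T vlt u a c b :=
  fun h' => keyLt_irr T vlt u a b (keyLt_trans T vlt hST u a h h')

include hST in
theorem keyLt_tri (a b c : S.Asgn) :
    b = c ∨ keyLt T vlt u a b c ∨ keyLt T vlt u a c b := by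
  by_cases hiff : ∀ X, Dev T u a b X ↔ Dev T u a c X
  · rcases trichotomous_of WellOrderingRel b c with hw | heq | hw
    · exact Or.inr (Or.inl (Or.inr ⟨hiff, hw⟩))
    · exact Or.inl heq
    · exact Or.inr (Or.inr (Or.inr ⟨fun X => (hiff X).symm, hw⟩))
  · obtain ⟨X, hX⟩ := not_forall.mp hiff
    obtain ⟨X0, hX0, hmin⟩ := (wfv vlt hST).has_min
      {X | ¬ (Dev T u a b X ↔ Dev T u a c X)} ⟨X, hX⟩
    have hbel : ∀ Y, vlt Y X0 → (Dev T u a b Y ↔ Dev T u a c Y) := by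
      intro Y hY
      by_contra hne
      exact hmin Y hne hY
    by_cases hb : Dev T u a b X0
    · have hc : ¬ Dev T u a c X0 := fun hc => hX0 ⟨fun _ => hc, fun _ => hb⟩
      exact Or.inr (Or.inr (Or.inl ⟨X0, ⟨hc, hb⟩, fun Y hY => (hbel Y hY).symm⟩))
    · have hc : Dev T u a c X0 := by
        by_contra hc
        exact hX0 ⟨fun h => absurd h hb, fun h => absurd h hc⟩
      exact Or.inr (Or.inl (Or.inl ⟨X0, ⟨hb, hc⟩, hbel⟩))

include hrec in
/-- The key minimality claim: the solution of `(Tmod a)_g` is strictly below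
every other world satisfying `g`. -/
theorem keyLt_min (a : S.Asgn) (g : S.Intervention) (b : S.Asgn)
    (hext : ∀ (Z : S.endo) (z : S.range Z), g Z = some z → b Z = z)
    (hne : b ≠ sol (Tmod T u a) vlt hST u g) :
    keyLt T vlt u a (sol (Tmod T u a) vlt hST u g) b := by
  set s := sol (Tmod T u a) vlt hST u g with hs
  have hErec := Tmod_rec T vlt hrec u a
  have hEne : ∃ X, s X ≠ b X := by
    by_contra hc
    push_neg at hc
    exact hne (funext fun X => hc X).symm
  obtain ⟨X0, hX0, hmin⟩ := (wfv vlt hST).has_min {X | s X ≠ b X} hEne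
  have hvals : ∀ Y, vlt Y X0 → s Y = b Y := by
    intro Y hY
    by_contra hne'
    exact hmin Y hne' hY
  have hF : ∀ Y, vlt Y X0 →
      (Tmod T u a).F Y u (fun Z => s Z.1) = (Tmod T u a).F Y u (fun Z => b Z.1) := by
    intro Y hY
    apply indep (Tmod T u a) vlt hST hErec
    intro Z hZ
    exact hvals Z.1 (vlt_tr vlt hST hZ hY)
  have hFX0 : (Tmod T u a).F X0 u (fun Z => s Z.1) =
      (Tmod T u a).F X0 u (fun Z => b Z.1) := by
    apply indep (Tmod T u a) vlt hST hErec
    intro Z hZ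
    exact hvals Z.1 hZ
  have hgX0 : g X0 = none := by
    cases hg : g X0 with
    | none => rfl
    | some z =>
      exact absurd ((sol_some (Tmod T u a) vlt hST u g hg).trans
        (hext X0 z hg).symm) hX0
  have hsX0 : s X0 = (Tmod T u a).F X0 u (fun Z => s Z.1) :=
    sol_none (Tmod T u a) vlt hST hErec u g hgX0
  refine Or.inl ⟨X0, ⟨?_, ?_⟩, fun Y hY => ?_⟩
  · exact not_not.mpr hsX0
  · show b X0 ≠ _
    rw [← hFX0, ← hsX0]
    exact fun h => hX0 h.symm
  · show s Y ≠ _ ↔ b Y ≠ _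
    rw [hvals Y hY, hF Y hY]

/-- The counterfactual structure induced by a recursive causal model in
context `u`. -/
noncomputable def buildM : CStruct S.Atom where
  World := S.Asgn
  worldFin := inferInstance
  val := fun b p => b p.1 = p.2
  R := fun a b c => b = c ∨ keyLt T vlt u a b c
  self_mem := fun a => ⟨a, Or.inl rfl⟩
  refl_on := fun _ b _ => Or.inl rfl
  trans_on := by
    rintro a b c d - - - (rfl | h1) h2
    · exact h2
    · rcases h2 with rfl | h2
      · exact Or.inr h1
      · exact Or.inr (keyLt_trans T vlt hST u a h1 h2)
  centered := by
    intro a b hne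
    have hsol : a = sol (Tmod T u a) vlt hST u (fun _ => none) :=
      sol_uniq (Tmod T u a) vlt hST (Tmod_rec T vlt hrec u a) u _
        (Tmod_sol_base T u a)
    have hk : keyLt T vlt u a a b := by
      conv_lhs => rw [hsol]
      exact keyLt_min T vlt hST hrec u a (fun _ => none) b
        (fun Z z hz => by cases hz) (fun h => hne (h.trans hsol.symm))
    refine ⟨Or.inr hk, ?_⟩
    rintro (h | h)
    · exact hne h
    · exact keyLt_irr T vlt u a a (keyLt_trans T vlt hST u a hk h)

theorem buildM_lt_iff (a b c : S.Asgn) :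
    (buildM T vlt hST hrec u).lt a b c ↔ keyLt T vlt u a b c := by
  constructor
  · rintro ⟨rfl | h1, h2⟩
    · exact absurd (Or.inl rfl) h2
    · exact h1
  · intro hk
    refine ⟨Or.inr hk, ?_⟩
    rintro (h | h)
    · exact keyLt_irr T vlt u a b (h ▸ hk)
    · exact keyLt_asymm T vlt hST u a hk h

theorem buildM_inW (a b : S.Asgn) : (buildM T vlt hST hrec u).inW a b :=
  ⟨b, Or.inl rfl⟩

theorem buildM_ante (g : S.Intervention) (b : S.Asgn) :
    intAnte S (buildM T vlt hST hrec u) g b ↔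
      ∀ (Z : S.endo) (z : S.range Z), g Z = some z → b Z = z :=
  Iff.rfl

theorem buildM_closest (a : S.Asgn) (g : S.Intervention) :
    (buildM T vlt hST hrec u).closest a (intAnte S (buildM T vlt hST hrec u) g) =
      {sol (Tmod T u a) vlt hST u g} := by
  set s := sol (Tmod T u a) vlt hST u g with hs
  have hsante : intAnte S (buildM T vlt hST hrec u) g s := by
    rw [buildM_ante]
    intro Z z hz
    exact (isSolution_sol (Tmod T u a) vlt hST (Tmod_rec T vlt hrec u a) u g Z).1 z hz
  ext b
  simp only [Set.mem_singleton_iff, CStruct.closest, Set.mem_setOf_eq]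
  constructor
  · rintro ⟨-, hbante, hbmin⟩
    by_contra hne
    have hk : keyLt T vlt u a s b :=
      keyLt_min T vlt hST hrec u a g b ((buildM_ante T vlt hST hrec u g b).mp hbante)
        (fun h => hne h)
    exact hbmin s hsante ((buildM_lt_iff T vlt hST hrec u a s b).mpr hk)
  · rintro rfl
    refine ⟨buildM_inW T vlt hST hrec u a s, hsante, fun v hv hlt => ?_⟩
    have hk := (buildM_lt_iff T vlt hST hrec u a v s).mp hlt
    have hvne : v ≠ s := fun he => keyLt_irr T vlt u a s (he ▸ hk)
    exact keyLt_asymm T vlt hST u a hk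
      (keyLt_min T vlt hST hrec u a g v ((buildM_ante T vlt hST hrec u g v).mp hv) hvne)

theorem buildM_satBasic (a : S.Asgn) (g : S.Intervention) (X : S.endo)
    (x : S.range X) :
    satBasic S (buildM T vlt hST hrec u) a g X x ↔
      sol (Tmod T u a) vlt hST u g X = x := by
  unfold satBasic CStruct.cfSat
  rw [buildM_closest T vlt hST hrec u a g]
  simp only [Set.mem_singleton_iff, forall_eq]
  exact ⟨fun h => h _ (Set.mem_singleton _), fun h v hv => by rw [Set.mem_singleton_iff.mp hv]; exact h⟩

theorem buildM_MRec : MRec S (buildM T vlt hST hrec u) := by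
  refine ⟨fun b X => ⟨b X, rfl, fun y hy => hy.symm⟩,
    fun a b => ⟨b, buildM_inW T vlt hST hrec u a b, fun X => rfl⟩,
    ?_, ?_⟩
  · intro a b c _ _ hne
    rcases keyLt_tri T vlt hST u a b c with heq | hk | hk
    · exact absurd heq hne
    · exact Or.inl ((buildM_lt_iff T vlt hST hrec u a b c).mpr hk)
    · exact Or.inr ((buildM_lt_iff T vlt hST hrec u a c b).mpr hk)
  · intro a
    refine ⟨vlt, hST, fun W' Y hWY g hgW hgY y w' => ?_⟩
    refine (buildM_satBasic T vlt hST hrec u a _ W' w').trans (Iff.trans ?_ (buildM_satBasic T vlt hST hrec u a g W' w').symm)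
    rw [sol_update (Tmod T u a) vlt hST (Tmod_rec T vlt hrec u a) u g Y y W' hWY]

include hrec in
theorem Tmod_base : Tmod T u (sol T vlt hST u (fun _ => none)) = T := by
  have h : ∀ X, ¬ devBase T u (sol T vlt hST u (fun _ => none)) X := by
    intro X
    exact not_not.mpr (sol_none T vlt hST hrec u (fun _ => none) rfl)
  cases T with
  | mk F =>
    simp only [Tmod]
    congr 1
    funext X u' vals
    rw [if_neg (h X)]

include hrec in
theorem sat_iff_satL' (ψ : LProp S) :
    T.sat u ψ ↔
      satL (buildM T vlt hST hrec u) (sol T vlt hST u (fun _ => none)) ψ := by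
  induction ψ with
  | basic g X x =>
    show (∀ a : S.Asgn, T.isSolution g u a → a X = x) ↔
      satBasic S (buildM T vlt hST hrec u) (sol T vlt hST u (fun _ => none)) g X x
    rw [buildM_satBasic]
    rw [Tmod_base T vlt hST hrec u]
    constructor
    · intro h
      exact h _ (isSolution_sol T vlt hST hrec u g)
    · intro h a ha
      rw [sol_uniq T vlt hST hrec u g ha]
      exact h
  | neg ψ ih => exact not_congr ih
  | and ψ1 ψ2 ih1 ih2 => exact and_congr ih1 ih2

end TtoM

end Stmt9

/-- A formula `φ ∈ Lprop(S)` is valid with respect to `Trec(S)`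
iff it is valid with respect to `Mrec(Φ_S)`. -/
theorem stmt9 (S : Signature) (φ : LProp S) :
    (∀ T : CausalModel S, T.Recursive → ∀ u : S.Ctx, T.sat u φ) ↔
    (∀ M : CStruct S.Atom, MRec S M → ∀ w : M.World, satL M w φ) := by
  constructor
  · intro h M hM w
    obtain ⟨vlt, hST, hRw⟩ := hM.2.2.2 w
    have u₀ : S.Ctx := fun e => Classical.choice (S.exoRangeNe e)
    exact (Stmt9.sat_iff_satL M hM w vlt hST hRw u₀ φ).mp
      (h _ (Stmt9.buildT_recursive M hM w vlt hST) u₀)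
  · intro h T hT u
    obtain ⟨vlt, hST, hrec⟩ := hT
    exact (Stmt9.sat_iff_satL' T vlt hST hrec u φ).mpr
      (h (Stmt9.buildM T vlt hST hrec u) (Stmt9.buildM_MRec T vlt hST hrec u)
        (Stmt9.sol T vlt hST u (fun _ => none)))
end

section
/- The formula ¬φ, where φ is the formula [X1←1](X2 = 1) ∧ [X1←1](X3 = 0) ∧ [X2←1](X3 = 1) ∧ [X2←1](X1 = 0) ∧ [X3←1](X1 = 1) ∧ [X3←1](X2 = 0), is valid with respect to the class Trec(S) of recursive causal models, for any signature S whose endogenous variables are V = {X1, X2, X3}, each with range {0, 1}. -/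
section Aux

variable {E : Type} {eF : Fintype E} {er : E → Type}
  {erF : ∀ e, Fintype (er e)} {erN : ∀ e, Nonempty (er e)}

/-- In a 3-variable recursive model (sorted as `p ≺ q ≺ r`), every intervened
model has a solution, and if `p` is not intervened on, its value in that
solution is the constant `F p u (fun _ => 0)`. -/
lemma exists_sol (T : CausalModel (S3 E eF er erF erN)) (u : (S3 E eF er erF erN).Ctx)
    (vlt : Fin 3 → Fin 3 → Prop)
    (hind : ∀ X Y : Fin 3, vlt X Y →
      ∀ a a' : ∀ Z : {Z : Fin 3 // Z ≠ X}, Fin 2,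
        (∀ Z : {Z : Fin 3 // Z ≠ X}, Z.1 ≠ Y → a Z = a' Z) → T.F X u a = T.F X u a')
    (p q r : Fin 3) (hpq : vlt p q) (hqr : vlt q r) (hpr : vlt p r)
    (hall : ∀ Z : Fin 3, Z = p ∨ Z = q ∨ Z = r)
    (hnpq : p ≠ q) (hnqr : q ≠ r) (hnpr : p ≠ r)
    (g : (S3 E eF er erF erN).Intervention) :
    ∃ a : (S3 E eF er erF erN).Asgn, T.isSolution g u a ∧
      (g p = none → a p = T.F p u (fun _ => 0)) := by
  classical
  set d : (S3 E eF er erF erN).Asgn := fun _ => 0 with hd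
  set ap : Fin 2 := (g p).getD (T.F p u (fun Z => d Z.1)) with hap
  set a1 : (S3 E eF er erF erN).Asgn := Function.update d p ap with ha1
  set aq : Fin 2 := (g q).getD (T.F q u (fun Z => a1 Z.1)) with haq
  set a2 : (S3 E eF er erF erN).Asgn := Function.update a1 q aq with ha2
  set ar : Fin 2 := (g r).getD (T.F r u (fun Z => a2 Z.1)) with har
  set a : (S3 E eF er erF erN).Asgn := Function.update a2 r ar with ha
  have hap' : a p = ap := by
    rw [ha, Function.update_of_ne hnpr, ha2, Function.update_of_ne hnpq, ha1,
      Function.update_self]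
  have haq' : a q = aq := by
    rw [ha, Function.update_of_ne hnqr, ha2, Function.update_self]
  have har' : a r = ar := by rw [ha, Function.update_self]
  -- the equation for p
  have heqp : T.F p u (fun Z => a Z.1) = T.F p u (fun _ => 0) := by
    set b : ∀ Z : {Z : Fin 3 // Z ≠ p}, Fin 2 :=
      fun Z => if Z.1 = r then 0 else a Z.1 with hb
    have step1 : T.F p u (fun Z => a Z.1) = T.F p u b := by
      apply hind p r hpr
      intro Z hZ
      simp [hb, hZ]
    have step2 : T.F p u b = T.F p u (fun _ => 0) := by
      apply hind p q hpq
      intro Z hZ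
      have : Z.1 = r := by
        rcases hall Z.1 with h | h | h
        · exact absurd h Z.2
        · exact absurd h hZ
        · exact h
      simp [hb, this]
    rw [step1, step2]
  have heqq : T.F q u (fun Z => a Z.1) = T.F q u (fun Z => a1 Z.1) := by
    apply hind q r hqr
    intro Z hZ
    have : Z.1 = p := by
      rcases hall Z.1 with h | h | h
      · exact h
      · exact absurd h Z.2
      · exact absurd h hZ
    rw [this, hap']
    simp [ha1, hap]
  have heqr : T.F r u (fun Z => a Z.1) = T.F r u (fun Z => a2 Z.1) := by
    congr 1
    funext Z
    simp [ha, Function.update_of_ne Z.2]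
  refine ⟨a, ?_, ?_⟩
  · intro X
    rcases hall X with h | h | h <;> rw [h]
    · constructor
      · intro x hx
        rw [hap', hap, hx]; rfl
      · intro hX
        rw [hap', hap, hX, Option.getD_none, ← heqp]
    · constructor
      · intro x hx
        rw [haq', haq, hx]; rfl
      · intro hX
        rw [haq', haq, hX, Option.getD_none, ← heqq]
    · constructor
      · intro x hx
        rw [har', har, hx]; rfl
      · intro hX
        rw [har', har, hX, Option.getD_none, ← heqr]
  · intro hX
    rw [hap', hap, hX, Option.getD_none]

end Aux

/-- `¬φ`, where `φ` is
`[X1←1](X2=1) ∧ [X1←1](X3=0) ∧ [X2←1](X3=1) ∧ [X2←1](X1=0) ∧ [X3←1](X1=1) ∧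
[X3←1](X2=0)`, is valid with respect to `Trec(S)` for any signature `S` with
endogenous variables `{X1, X2, X3}`, each with range `{0, 1}`. -/
theorem stmt10 (E : Type) (eF : Fintype E) (er : E → Type)
    (erF : ∀ e, Fintype (er e)) (erN : ∀ e, Nonempty (er e))
    (T : CausalModel (S3 E eF er erF erN)) (hT : T.Recursive)
    (u : (S3 E eF er erF erN).Ctx) :
    T.sat u (.neg phi3) := by
  intro hphi
  obtain ⟨h1, h2, h3, h4, h5, h6⟩ := hphi
  obtain ⟨vlt, hst, hrec⟩ := hT
  have hind : ∀ X Y : Fin 3, vlt X Y →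
      ∀ a a' : ∀ Z : {Z : Fin 3 // Z ≠ X}, Fin 2,
        (∀ Z : {Z : Fin 3 // Z ≠ X}, Z.1 ≠ Y → a Z = a' Z) → T.F X u a = T.F X u a' :=
    fun X Y h a a' ha => hrec X Y h u a a' ha
  have irrefl := hst.irrefl
  have htrans := hst.trans
  -- find the sorted triple p ≺ q ≺ r
  obtain ⟨p, q, r, hpq, hqr, hpr, hall⟩ :
      ∃ p q r : Fin 3, vlt p q ∧ vlt q r ∧ vlt p r ∧
        ∀ Z : Fin 3, Z = p ∨ Z = q ∨ Z = r := by
    rcases trichotomous_of vlt 0 1 with h01 | h01 | h01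
    · rcases trichotomous_of vlt 1 2 with h12 | h12 | h12
      · exact ⟨0, 1, 2, h01, h12, htrans _ _ _ h01 h12, by decide⟩
      · exact absurd h12 (by decide : ¬(1:Fin 3) = 2)
      · rcases trichotomous_of vlt 0 2 with h02 | h02 | h02
        · exact ⟨0, 2, 1, h02, h12, h01, by decide⟩
        · exact absurd h02 (by decide : ¬(0:Fin 3) = 2)
        · exact ⟨2, 0, 1, h02, h01, htrans _ _ _ h02 h01, by decide⟩
    · exact absurd h01 (by decide : ¬(0:Fin 3) = 1)
    · rcases trichotomous_of vlt 0 2 with h02 | h02 | h02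
      · exact ⟨1, 0, 2, h01, h02, htrans _ _ _ h01 h02, by decide⟩
      · exact absurd h02 (by decide : ¬(0:Fin 3) = 2)
      · rcases trichotomous_of vlt 1 2 with h12 | h12 | h12
        · exact ⟨1, 2, 0, h12, h02, h01, by decide⟩
        · exact absurd h12 (by decide : ¬(1:Fin 3) = 2)
        · exact ⟨2, 1, 0, h12, h01, htrans _ _ _ h12 h01, by decide⟩
  have hnpq : p ≠ q := fun h => irrefl p (h ▸ hpq)
  have hnqr : q ≠ r := fun h => irrefl q (h ▸ hqr)
  have hnpr : p ≠ r := fun h => irrefl p (h ▸ hpr)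
  have key : ∀ j : Fin 3, p ≠ j →
      ∃ a : (S3 E eF er erF erN).Asgn, T.isSolution (gI j) u a ∧
        a p = T.F p u (fun _ => 0) := by
    intro j hj
    obtain ⟨a, hsol, hval⟩ := exists_sol T u vlt hind p q r hpq hqr hpr hall
      hnpq hnqr hnpr (gI j)
    exact ⟨a, hsol, hval (by simp [gI, hj])⟩
  have hc : ∀ (j1 j2 : Fin 3) (x1 x2 : Fin 2), p ≠ j1 → p ≠ j2 → x1 ≠ x2 →
      (∀ a : (S3 E eF er erF erN).Asgn, T.isSolution (gI j1) u a → a p = x1) →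
      (∀ a : (S3 E eF er erF erN).Asgn, T.isSolution (gI j2) u a → a p = x2) →
      False := by
    intro j1 j2 x1 x2 h1 h2 hx k1 k2
    obtain ⟨a, hsa, hva⟩ := key j1 h1
    obtain ⟨b, hsb, hvb⟩ := key j2 h2
    exact hx ((k1 a hsa).symm.trans (hva.trans (hvb.symm.trans (k2 b hsb))))
  have hp : p = 0 ∨ p = 1 ∨ p = 2 := by
    rcases p with ⟨_ | _ | _ | _, hv⟩
    · left; rfl
    · right; left; rfl
    · right; right; rfl
    · omega
  rcases hp with h | h | h <;> subst h
  · exact hc 1 2 0 1 (by decide) (by decide) (by decide) h4 h5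
  · exact hc 0 2 1 0 (by decide) (by decide) (by decide) h1 h6
  · exact hc 0 1 0 1 (by decide) (by decide) (by decide) h2 h3
end

section
/- The formula ¬φ, where φ is the formula [X1←1](X2 = 1) ∧ [X1←1](X3 = 0) ∧ [X2←1](X3 = 1) ∧ [X2←1](X1 = 0) ∧ [X3←1](X1 = 1) ∧ [X3←1](X2 = 0), is valid with respect to the class M_f(Φ_S) of full acceptable counterfactual structures (and hence also with respect to M_f^+(Φ_S)), for the signature S with endogenous variables V = {X1, X2, X3}, each with range {0, 1}. -/
section Aux

variable {Φ : Type} (M : CStruct Φ)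

lemma CStruct.lt_trans' {w a b c : M.World} (ha : M.inW w a) (hb : M.inW w b)
    (hc : M.inW w c) (hab : M.lt w a b) (hbc : M.lt w b c) : M.lt w a c := by
  refine ⟨M.trans_on w a b c ha hb hc hab.1 hbc.1, fun hca => ?_⟩
  exact hbc.2 (M.trans_on w c a b hc ha hb hca hab.1)

open Classical in
lemma CStruct.exists_closest_le (w : M.World) (A : M.World → Prop) :
    ∀ (n : ℕ) (v : M.World), (Finset.univ.filter (fun u => M.lt w u v)).card ≤ n →
      M.inW w v → A v → ∃ m, m ∈ M.closest w A ∧ M.R w m v := by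
  intro n
  induction n with
  | zero =>
    intro v hcard hv hA
    refine ⟨v, ⟨hv, hA, fun v' hA' hlt => ?_⟩, M.refl_on w v hv⟩
    have : v' ∈ Finset.univ.filter (fun u => M.lt w u v) := by
      simp [hlt]
    have := Finset.card_pos.2 ⟨v', this⟩
    omega
  | succ n ih =>
    intro v hcard hv hA
    by_cases h : ∃ v', A v' ∧ M.lt w v' v
    · obtain ⟨v', hA', hlt⟩ := h
      have hv' : M.inW w v' := ⟨v, hlt.1⟩
      have hsub : Finset.univ.filter (fun u => M.lt w u v') ⊂
          Finset.univ.filter (fun u => M.lt w u v) := by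
        constructor
        · intro u hu
          simp only [Finset.mem_filter, Finset.mem_univ, true_and] at hu ⊢
          exact M.lt_trans' ⟨v', hu.1⟩ hv' hv hu hlt
        · intro hsub'
          have : v' ∈ Finset.univ.filter (fun u => M.lt w u v) := by simp [hlt]
          have := hsub' this
          simp only [Finset.mem_filter, Finset.mem_univ, true_and] at this
          exact this.2 (M.refl_on w v' hv')
      have hcard' : (Finset.univ.filter (fun u => M.lt w u v')).card ≤ n := by
        have := Finset.card_lt_card hsub
        omega
      obtain ⟨m, hm, hmv'⟩ := ih v' hcard' hv' hA'
      exact ⟨m, hm, M.trans_on w m v' v hm.1 hv' hv hmv' hlt.1⟩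
    · exact ⟨v, ⟨hv, hA, fun v' hA' hlt => h ⟨v', hA', hlt⟩⟩, M.refl_on w v hv⟩

open Classical in
lemma CStruct.exists_closest (w : M.World) (A : M.World → Prop) (v : M.World)
    (hv : M.inW w v) (hA : A v) : ∃ m, m ∈ M.closest w A ∧ M.R w m v :=
  M.exists_closest_le w A (Finset.univ.filter (fun u => M.lt w u v)).card v le_rfl hv hA

/-- Promotion: if `v2` is closest, `v1` satisfies `A`, and `v1 ⪯ v2 ⪯ v1`,
then `v1` is closest as well. -/
lemma CStruct.closest_of_le {w v1 v2 : M.World} {A : M.World → Prop}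
    (h2 : v2 ∈ M.closest w A) (h1A : A v1) (h21 : M.R w v2 v1) (h12 : M.R w v1 v2) :
    v1 ∈ M.closest w A := by
  have hv1 : M.inW w v1 := ⟨v2, h12⟩
  refine ⟨hv1, h1A, fun v' hA' hlt => ?_⟩
  have hv' : M.inW w v' := ⟨v1, hlt.1⟩
  exact h2.2.2 v' hA' ⟨M.trans_on w v' v1 v2 hv' hv1 h2.1 hlt.1 h12,
    fun h2v' => hlt.2 (M.trans_on w v1 v2 v' hv1 h2.1 hv' h12 h2v')⟩

end Aux

lemma ante_gI {E : Type} {eF : Fintype E} {er : E → Type}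
    {erF : ∀ e, Fintype (er e)} {erN : ∀ e, Nonempty (er e)}
    (M : CStruct (S3 E eF er erF erN).Atom) (i : Fin 3) (v : M.World) :
    intAnte (S3 E eF er erF erN) M (gI i) v ↔ M.val v ⟨i, 1⟩ := by
  constructor
  · intro h
    exact h i 1 (by simp [gI])
  · intro h Y y hY
    simp only [gI] at hY
    split at hY
    · next heq => cases heq; cases hY; exact h
    · exact absurd hY (by simp)

/-- `¬φ`, where `φ` is
`[X1←1](X2=1) ∧ [X1←1](X3=0) ∧ [X2←1](X3=1) ∧ [X2←1](X1=0) ∧ [X3←1](X1=1) ∧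
[X3←1](X2=0)`, is valid with respect to the class `M_f(Φ_S)` of full acceptable
counterfactual structures (hence also with respect to `M_f⁺(Φ_S)`), for the
signature with endogenous variables `{X1, X2, X3}`, each with range `{0, 1}`. -/
theorem stmt11 (E : Type) (eF : Fintype E) (er : E → Type)
    (erF : ∀ e, Fintype (er e)) (erN : ∀ e, Nonempty (er e))
    (M : CStruct (S3 E eF er erF erN).Atom)
    (hacc : Acceptable (S3 E eF er erF erN) M)
    (hfull : Full (S3 E eF er erF erN) M) (w : M.World) :
    satL M w (.neg phi3) := by
  intro hphi
  obtain ⟨h12, h13, h23, h21, h31, h32⟩ :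
      satBasic (S3 E eF er erF erN) M w (gI 0) 1 1 ∧ satBasic (S3 E eF er erF erN) M w (gI 0) 2 0 ∧
      satBasic (S3 E eF er erF erN) M w (gI 1) 2 1 ∧ satBasic (S3 E eF er erF erN) M w (gI 1) 0 0 ∧
      satBasic (S3 E eF er erF erN) M w (gI 2) 0 1 ∧ satBasic (S3 E eF er erF erN) M w (gI 2) 1 0 := by
    simp only [phi3, satL] at hphi; exact hphi
  -- uniqueness of values
  have huniq : ∀ (v : M.World) (X : Fin 3) (x y : Fin 2),
      M.val v ⟨X, x⟩ → M.val v ⟨X, y⟩ → x = y := by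
    intro v X x y hx hy
    obtain ⟨z, _, hz⟩ := hacc v X
    rw [hz x hx, hz y hy]
  -- a world in W_w with X1 = 1
  obtain ⟨v0, hv0, hval0⟩ := hfull w (fun _ => 1)
  have hv0A : intAnte (S3 E eF er erF erN) M (gI 0) v0 := (ante_gI M 0 v0).2 (hval0 0)
  -- v1 : closest X1 = 1 world
  obtain ⟨v1, hv1, _⟩ := M.exists_closest w (intAnte (S3 E eF er erF erN) M (gI 0)) v0 hv0 hv0A
  have hv1_21 : M.val v1 ⟨1, 1⟩ := h12 v1 hv1
  have hv1_30 : M.val v1 ⟨2, 0⟩ := h13 v1 hv1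
  -- v2 : closest X2 = 1 world below v1
  obtain ⟨v2, hv2, hv2v1⟩ := M.exists_closest w (intAnte (S3 E eF er erF erN) M (gI 1)) v1 hv1.1
    ((ante_gI M 1 v1).2 hv1_21)
  have hv2_31 : M.val v2 ⟨2, 1⟩ := h23 v2 hv2
  have hv2_10 : M.val v2 ⟨0, 0⟩ := h21 v2 hv2
  have hlt21 : M.lt w v2 v1 := by
    refine ⟨hv2v1, fun h12' => ?_⟩
    have := h23 v1 (M.closest_of_le hv2 ((ante_gI M 1 v1).2 hv1_21) hv2v1 h12')
    exact absurd (huniq v1 2 0 1 hv1_30 this) (by decide)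
  -- v3 : closest X3 = 1 world below v2
  obtain ⟨v3, hv3, hv3v2⟩ := M.exists_closest w (intAnte (S3 E eF er erF erN) M (gI 2)) v2 hv2.1
    ((ante_gI M 2 v2).2 hv2_31)
  have hv3_11 : M.val v3 ⟨0, 1⟩ := h31 v3 hv3
  have hv3_20 : M.val v3 ⟨1, 0⟩ := h32 v3 hv3
  have hlt32 : M.lt w v3 v2 := by
    refine ⟨hv3v2, fun h23' => ?_⟩
    have := h31 v2 (M.closest_of_le hv3 ((ante_gI M 2 v2).2 hv2_31) hv3v2 h23')
    exact absurd (huniq v2 0 0 1 hv2_10 this) (by decide)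
  -- v4 : closest X1 = 1 world below v3
  obtain ⟨v4, hv4, hv4v3⟩ := M.exists_closest w (intAnte (S3 E eF er erF erN) M (gI 0)) v3 hv3.1
    ((ante_gI M 0 v3).2 hv3_11)
  have hlt43 : M.lt w v4 v3 := by
    refine ⟨hv4v3, fun h34' => ?_⟩
    have := h12 v3 (M.closest_of_le hv4 ((ante_gI M 0 v3).2 hv3_11) hv4v3 h34')
    exact absurd (huniq v3 1 0 1 hv3_20 this) (by decide)
  -- strict descent contradicts minimality of v1
  have hlt41 : M.lt w v4 v1 :=
    M.lt_trans' hv4.1 hv3.1 hv1.1 hlt43 (M.lt_trans' hv3.1 hv2.1 hv1.1 hlt32 hlt21)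
  exact hv1.2.2 v4 hv4.2.1 hlt41
end

section
/- For all formulas φ1, φ2, φ3 of the counterfactual language L^C(Φ), the formula ((φ1 > φ2) ∧ (φ2 > φ3)) → ((φ1 ∨ φ2) > φ3) is provable in the axiom system AX. -/
section Stmt13Aux

variable {Φ : Type} {extra : CForm Φ → Prop}

/-- Weakening: a theorem is provable under any hypothesis. -/
lemma axprov_deduce_of {h a : CForm Φ} (ha : AXProv Φ extra a) :
    AXProv Φ extra (CForm.imp h a) := by
  refine AXProv.mp (AXProv.taut ?_) ha
  intro v
  simp [CForm.evalB, CForm.imp, CForm.or, CForm.and, CForm.neg]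
  try tauto

/-- Modus ponens under a hypothesis. -/
lemma axprov_deduce_mp {h a b : CForm Φ}
    (hab : AXProv Φ extra (CForm.imp h (CForm.imp a b)))
    (ha : AXProv Φ extra (CForm.imp h a)) :
    AXProv Φ extra (CForm.imp h b) := by
  refine AXProv.mp (AXProv.mp (AXProv.taut ?_) hab) ha
  intro v
  simp [CForm.evalB, CForm.imp, CForm.or, CForm.and, CForm.neg]
  try tauto

/-- Conjunction introduction under a hypothesis. -/
lemma axprov_deduce_and {h a b : CForm Φ}
    (ha : AXProv Φ extra (CForm.imp h a)) (hb : AXProv Φ extra (CForm.imp h b)) :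
    AXProv Φ extra (CForm.imp h (CForm.and a b)) := by
  refine AXProv.mp (AXProv.mp (AXProv.taut ?_) ha) hb
  intro v
  simp [CForm.evalB, CForm.imp, CForm.or, CForm.and, CForm.neg]
  try tauto

/-- Composing an unconditional implication with a conditional one. -/
lemma axprov_deduce_comp {h a b : CForm Φ}
    (hab : AXProv Φ extra (CForm.imp a b)) (ha : AXProv Φ extra (CForm.imp h a)) :
    AXProv Φ extra (CForm.imp h b) :=
  axprov_deduce_mp (axprov_deduce_of hab) ha

end Stmt13Aux

/-- For all formulas `φ1 φ2 φ3` of `L^C(Φ)`,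
`((φ1 > φ2) ∧ (φ2 > φ3)) → ((φ1 ∨ φ2) > φ3)` is provable in AX. -/
theorem stmt13 (Φ : Type) (φ1 φ2 φ3 : CForm Φ) :
    AXProv Φ (fun _ => False)
      (CForm.imp (CForm.and (CForm.cf φ1 φ2) (CForm.cf φ2 φ3))
        (CForm.cf (CForm.or φ1 φ2) φ3)) := by
  set A := CForm.or φ1 φ2 with hA
  set χ := CForm.imp φ2 φ3 with hχ
  set H := CForm.and (CForm.cf φ1 φ2) (CForm.cf φ2 φ3) with hH
  set P := AXProv Φ (fun _ => False) with hP
  -- hypotheses extracted from H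
  have T1 : P (CForm.imp H (CForm.cf φ1 φ2)) := by
    refine AXProv.taut ?_
    intro v; simp [hH, CForm.evalB, CForm.imp, CForm.or]; try tauto
  have T2 : P (CForm.imp H (CForm.cf φ2 φ3)) := by
    refine AXProv.taut ?_
    intro v; simp [hH, CForm.evalB, CForm.imp, CForm.or]; try tauto
  -- Step 1: H → (A > φ2), via A4 with φ2 > φ2 (A1)
  have C1 : P (CForm.imp H (CForm.cf A φ2)) := by
    refine axprov_deduce_mp (axprov_deduce_of (AXProv.a4 φ1 φ2 φ2)) ?_
    exact axprov_deduce_and T1 (axprov_deduce_of (AXProv.a1 φ2))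
  -- Step 2: H → ((A ∧ φ2) > φ3), via RA1 with φ2 ↔ A ∧ φ2
  have C2 : P (CForm.imp H (CForm.cf (CForm.and A φ2) φ3)) := by
    refine axprov_deduce_comp (AXProv.ra1 (AXProv.taut ?_)) T2
    intro v; simp [hA, CForm.evalB, CForm.iff, CForm.imp, CForm.or]; try tauto
  -- Step 3: H → ((A ∧ φ2) > χ), via RA2 with φ3 → χ
  have C3 : P (CForm.imp H (CForm.cf (CForm.and A φ2) χ)) := by
    refine axprov_deduce_comp (AXProv.ra2 (AXProv.taut ?_)) C2
    intro v; simp [hχ, CForm.evalB, CForm.imp, CForm.or]; try tauto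
  -- Step 4: (A ∧ ¬φ2) > χ, via A1 and RA2 with (A ∧ ¬φ2) → χ
  set D := CForm.and A (CForm.neg φ2) with hD
  have C4 : P (CForm.cf D χ) := by
    refine AXProv.mp (AXProv.ra2 (AXProv.taut ?_)) (AXProv.a1 D)
    intro v; simp [hD, hχ, CForm.evalB, CForm.imp, CForm.or]; try tauto
  -- Step 5: H → (((A ∧ φ2) ∨ D) > χ), via A4
  have C5 : P (CForm.imp H (CForm.cf (CForm.or (CForm.and A φ2) D) χ)) := by
    refine axprov_deduce_mp (axprov_deduce_of (AXProv.a4 (CForm.and A φ2) D χ)) ?_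
    exact axprov_deduce_and C3 (axprov_deduce_of C4)
  -- Step 6: H → (A > χ), via RA1 with ((A ∧ φ2) ∨ D) ↔ A
  have C6 : P (CForm.imp H (CForm.cf A χ)) := by
    refine axprov_deduce_comp (AXProv.ra1 (AXProv.taut ?_)) C5
    intro v; simp [hA, hD, CForm.evalB, CForm.iff, CForm.imp, CForm.or]; try tauto
  -- Step 7: H → (A > (φ2 ∧ χ)), via A2
  have C7 : P (CForm.imp H (CForm.cf A (CForm.and φ2 χ))) := by
    refine axprov_deduce_mp (axprov_deduce_of (AXProv.a2 A φ2 χ)) ?_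
    exact axprov_deduce_and C1 C6
  -- Step 8: H → (A > φ3), via RA2 with (φ2 ∧ χ) → φ3
  refine axprov_deduce_comp (AXProv.ra2 (AXProv.taut ?_)) C7
  intro v; simp [hχ, CForm.evalB, CForm.imp, CForm.or]; try tauto
end

section
/- Over the primitive propositions Φ_S of a signature S, every instance of axiom scheme C2 (Definiteness), read as the counterfactual formula ⋁_{x ∈ R(X)} ((Y⃗ = y⃗) > (X = x)) where Y⃗ = y⃗ is a conjunction of atoms with distinct variables, is provable in the system AX+ (AX together with A7) augmented with the axiom scheme V1: ⋁_{x ∈ R(X)} X = x. -/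
/-- The axiom scheme V1 over `Φ_S`: `⋁_{x ∈ R(X)} X = x`. -/
def V1Scheme (S : Signature) : CForm S.Atom → Prop := fun θ =>
  ∃ X : S.endo,
    θ = CForm.bigOr
      (((Finset.univ : Finset (S.range X)).toList).map (fun x => CForm.atom ⟨X, x⟩))

section Aux

variable {Φ : Type} {extra : CForm Φ → Prop}

lemma taut_imp_self (φ : CForm Φ) : CForm.Taut (CForm.imp φ φ) := by
  intro v; simp [CForm.imp, CForm.or, CForm.evalB]

lemma prov_imp_of_prov {θ : CForm Φ} (φ : CForm Φ) (h : AXProv Φ extra θ) :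
    AXProv Φ extra (CForm.imp φ θ) := by
  have t : CForm.Taut (CForm.imp θ (CForm.imp φ θ)) := by
    intro v; simp [CForm.imp, CForm.or, CForm.evalB]; tauto
  exact AXProv.mp (AXProv.taut t) h

lemma prov_or_mono {a b c d : CForm Φ}
    (h1 : AXProv Φ extra (CForm.imp a (CForm.or b c)))
    (h2 : AXProv Φ extra (CForm.imp c d)) :
    AXProv Φ extra (CForm.imp a (CForm.or b d)) := by
  have t : CForm.Taut (CForm.imp (CForm.imp c d)
      (CForm.imp (CForm.imp a (CForm.or b c)) (CForm.imp a (CForm.or b d)))) := by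
    intro v; simp [CForm.imp, CForm.or, CForm.evalB]; tauto
  exact AXProv.mp (AXProv.mp (AXProv.taut t) h2) h1

lemma distribOr
    (hA7 : ∀ φ ψ1 ψ2 : CForm Φ,
      extra (CForm.imp (CForm.cf φ (CForm.or ψ1 ψ2))
        (CForm.or (CForm.cf φ ψ1) (CForm.cf φ ψ2))))
    (A : CForm Φ) : ∀ (L : List (CForm Φ)), L ≠ [] →
    AXProv Φ extra (CForm.imp (CForm.cf A (CForm.bigOr L))
      (CForm.bigOr (L.map (CForm.cf A))))
  | [], h => absurd rfl h
  | [ψ], _ => AXProv.taut (taut_imp_self (CForm.cf A ψ))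
  | ψ :: ψ' :: L', _ => by
    have ih := distribOr hA7 A (ψ' :: L') (by simp)
    have a7 : AXProv Φ extra (CForm.imp (CForm.cf A (CForm.or ψ (CForm.bigOr (ψ' :: L'))))
        (CForm.or (CForm.cf A ψ) (CForm.cf A (CForm.bigOr (ψ' :: L'))))) :=
      AXProv.ax (hA7 A ψ (CForm.bigOr (ψ' :: L')))
    exact prov_or_mono a7 ih

end Aux

/-- Every instance of C2 (Definiteness), read as the counterfactual
formula `⋁_{x ∈ R(X)} ((Y⃗ = y⃗) > (X = x))` with `Y⃗ = y⃗` a conjunction of atoms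
with distinct variables, is provable in AX⁺ (AX together with A7) augmented
with the scheme V1. -/
theorem stmt15 (S : Signature) (l : List S.Atom) (hl : (l.map Sigma.fst).Nodup)
    (X : S.endo) :
    AXProv S.Atom (fun θ => A7Scheme S.Atom θ ∨ V1Scheme S θ)
      (CForm.bigOr (((Finset.univ : Finset (S.range X)).toList).map
        (fun x => CForm.cf (CForm.bigAnd (l.map CForm.atom)) (CForm.atom ⟨X, x⟩)))) := by
  set extra : CForm S.Atom → Prop := fun θ => A7Scheme S.Atom θ ∨ V1Scheme S θ with hex
  set A : CForm S.Atom := CForm.bigAnd (l.map CForm.atom) with hA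
  set Lat : List (CForm S.Atom) :=
    ((Finset.univ : Finset (S.range X)).toList).map (fun x => CForm.atom ⟨X, x⟩) with hLat
  have hv1 : AXProv S.Atom extra (CForm.bigOr Lat) := AXProv.ax (Or.inr ⟨X, rfl⟩)
  have h2 : AXProv S.Atom extra (CForm.imp (CForm.cf A A) (CForm.cf A (CForm.bigOr Lat))) :=
    AXProv.ra2 (prov_imp_of_prov A hv1)
  have h3 : AXProv S.Atom extra (CForm.cf A (CForm.bigOr Lat)) :=
    AXProv.mp h2 (AXProv.a1 A)
  have hne : Lat ≠ [] := by
    simp [hLat, Finset.toList_eq_nil]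
    exact Finset.univ_nonempty.ne_empty
  have hd := distribOr (extra := extra)
    (fun φ ψ1 ψ2 => Or.inl ⟨φ, ψ1, ψ2, rfl⟩) A Lat hne
  have := AXProv.mp hd h3
  rw [hLat, List.map_map] at this
  exact this
end

section
/- For every signature S and every formula φ of the language Lex(S), there is a formula φ' of the sublanguage Lprop(S) such that φ ↔ φ' is valid with respect to the class Tun(S) (and hence also with respect to Trec(S) ⊆ Tun(S)): for every T ∈ Tun(S) and every context u⃗, (T, u⃗) ⊨ φ iff (T, u⃗) ⊨ φ'. -/
section Aux

variable {S : Signature}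

/-- A recursive model's `F X` depends only on variables below `X`. -/
theorem rec_dep {T : CausalModel S} {vlt : S.endo → S.endo → Prop}
    (hsto : IsStrictTotalOrder S.endo vlt)
    (hrec : ∀ X Y : S.endo, vlt X Y →
      ∀ (u : S.Ctx) (a a' : ∀ Z : {Z : S.endo // Z ≠ X}, S.range Z.1),
        (∀ Z : {Z : S.endo // Z ≠ X}, Z.1 ≠ Y → a Z = a' Z) → T.F X u a = T.F X u a')
    (X : S.endo) (u : S.Ctx) (a a' : ∀ Z : {Z : S.endo // Z ≠ X}, S.range Z.1)
    (h : ∀ Z : {Z : S.endo // Z ≠ X}, a Z ≠ a' Z → vlt X Z.1) :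
    T.F X u a = T.F X u a' := by
  suffices H : ∀ s : Finset S.endo, ∀ a a' : ∀ Z : {Z : S.endo // Z ≠ X}, S.range Z.1,
      (∀ Z : {Z : S.endo // Z ≠ X}, a Z ≠ a' Z → Z.1 ∈ s ∧ vlt X Z.1) →
      T.F X u a = T.F X u a' by
    exact H Finset.univ a a' (fun Z hZ => ⟨Finset.mem_univ _, h Z hZ⟩)
  intro s
  induction s using Finset.induction_on with
  | empty =>
    intro a a' h'
    have : a = a' := by
      funext Z
      by_contra hc
      simpa using (h' Z hc).1
    rw [this]
  | @insert Y s hYs ih =>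
    intro a a' h'
    by_cases hx : ∃ hYX : Y ≠ X, a ⟨Y, hYX⟩ ≠ a' ⟨Y, hYX⟩
    · obtain ⟨hYX, hd⟩ := hx
      have hvXY : vlt X Y := (h' ⟨Y, hYX⟩ hd).2
      set a'' : ∀ Z : {Z : S.endo // Z ≠ X}, S.range Z.1 :=
        Function.update a ⟨Y, hYX⟩ (a' ⟨Y, hYX⟩) with ha''
      have h1 : T.F X u a = T.F X u a'' := by
        apply hrec X Y hvXY
        intro Z hZ
        rw [ha'', Function.update_of_ne]
        intro hc; exact hZ (by rw [hc])
      have h2 : T.F X u a'' = T.F X u a' := by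
        apply ih
        intro Z hZ
        have hZY : Z ≠ ⟨Y, hYX⟩ := by
          intro hc; rw [hc, ha''] at hZ; simp at hZ
        have hZY1 : Z.1 ≠ Y := by
          intro hc; exact hZY (Subtype.ext hc)
        have haZ : a'' Z = a Z := by rw [ha'', Function.update_of_ne hZY]
        rw [haZ] at hZ
        have := h' Z hZ
        exact ⟨(Finset.mem_insert.mp this.1).resolve_left hZY1, this.2⟩
      rw [h1, h2]
    · apply ih
      intro Z hZ
      have := h' Z hZ
      refine ⟨?_, this.2⟩
      rcases Finset.mem_insert.mp this.1 with hc | hm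
      · exfalso
        apply hx
        subst hc
        exact ⟨Z.2, hZ⟩
      · exact hm

/-- Recursive causal models have unique solutions. -/
theorem recursive_uniqueSolutions {T : CausalModel S} (hT : T.Recursive) :
    T.UniqueSolutions := by
  obtain ⟨vlt, hsto, hrec⟩ := hT
  haveI := hsto
  have wf : WellFounded vlt := by
    haveI : IsTrans S.endo vlt := hsto.toIsTrans
    haveI : IsIrrefl S.endo vlt := inferInstance
    exact Finite.wellFounded_of_trans_of_irrefl vlt
  intro g u
  haveI : DecidableRel vlt := fun _ _ => Classical.dec _
  -- construct the solution by well-founded recursion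
  set a : S.Asgn := wf.fix (fun X rec =>
    match g X with
    | some x => x
    | none => T.F X u (fun Y =>
        if h : vlt Y.1 X then rec Y.1 h else Classical.arbitrary _)) with ha
  have hfix : ∀ X : S.endo, a X =
      match g X with
      | some x => x
      | none => T.F X u (fun Y =>
          if _ : vlt Y.1 X then a Y.1 else Classical.arbitrary _) := by
    intro X
    rw [ha, WellFounded.fix_eq]
  have hsol : T.isSolution g u a := by
    intro X
    constructor
    · intro x hx
      rw [hfix X, hx]
    · intro hx
      rw [hfix X, hx]
      apply rec_dep hsto hrec
      intro Z hZ
      by_cases hv : vlt Z.1 X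
      · simp [hv] at hZ
      · rcases trichotomous_of vlt X Z.1 with h | h | h
        · exact h
        · exact absurd h.symm Z.2
        · exact absurd h hv
  refine ⟨a, hsol, ?_⟩
  intro b hb
  funext X
  induction X using WellFounded.induction wf with
  | _ X IH =>
    rcases hX : g X with _ | x
    · have h1 := (hb X).2 hX
      have h2 := (hsol X).2 hX
      rw [h1, h2]
      apply rec_dep hsto hrec
      intro Z hZ
      rcases trichotomous_of vlt X Z.1 with h | h | h
      · exact h
      · exact absurd h.symm Z.2
      · exact absurd (IH Z.1 h) hZ
    · rw [(hb X).1 x hX, (hsol X).1 x hX]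

/-- Translation of a Boolean combination of atoms under an intervention. -/
def trB (g : S.Intervention) : BForm S → LProp S
  | .atom X x => .basic g X x
  | .neg ψ => .neg (trB g ψ)
  | .and ψ χ => .and (trB g ψ) (trB g χ)

/-- Translation of `Lex(S)` into `Lprop(S)`. -/
def trEx : LEx S → LProp S
  | .basic g ψ => trB g ψ
  | .neg φ => .neg (trEx φ)
  | .and φ ψ => .and (trEx φ) (trEx ψ)

theorem trB_sat {T : CausalModel S} {g : S.Intervention} {u : S.Ctx} {a : S.Asgn}
    (ha : T.isSolution g u a) (hu : ∀ b, T.isSolution g u b → b = a) :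
    ∀ ψ : BForm S, (T.sat u (trB g ψ) ↔ ψ.holds a) := by
  intro ψ
  induction ψ with
  | atom X x =>
    simp only [trB, CausalModel.sat, BForm.holds]
    constructor
    · intro h; exact h a ha
    · intro h b hb; rw [hu b hb]; exact h
  | neg ψ ih => simp only [trB, CausalModel.sat, BForm.holds]; rw [ih]
  | and ψ χ ih1 ih2 => simp only [trB, CausalModel.sat, BForm.holds]; rw [ih1, ih2]

theorem trEx_sat {T : CausalModel S} (hT : T.UniqueSolutions) (u : S.Ctx) :
    ∀ φ : LEx S, (T.satEx u φ ↔ T.sat u (trEx φ)) := by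
  intro φ
  induction φ with
  | basic g ψ =>
    obtain ⟨a, ha, hu⟩ := hT g u
    rw [show trEx (.basic g ψ) = trB g ψ from rfl, trB_sat ha hu ψ]
    simp only [CausalModel.satEx]
    constructor
    · intro h; exact h a ha
    · intro h b hb; rw [hu b hb]; exact h
  | neg φ ih => simp only [trEx, CausalModel.satEx, CausalModel.sat]; rw [ih]
  | and φ ψ ih1 ih2 => simp only [trEx, CausalModel.satEx, CausalModel.sat]; rw [ih1, ih2]

end Aux

/-- For every `φ ∈ Lex(S)` there is a `φ' ∈ Lprop(S)` such that
`φ ↔ φ'` is valid with respect to `Tun(S)` (and hence also with respect to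
`Trec(S)`). -/
theorem stmt16 (S : Signature) (φ : LEx S) :
    ∃ φ' : LProp S,
      (∀ T : CausalModel S, T.UniqueSolutions →
        ∀ u : S.Ctx, (T.satEx u φ ↔ T.sat u φ')) ∧
      (∀ T : CausalModel S, T.Recursive →
        ∀ u : S.Ctx, (T.satEx u φ ↔ T.sat u φ')) := by
  refine ⟨trEx φ, fun T hT u => trEx_sat hT u φ, fun T hT u => trEx_sat (recursive_uniqueSolutions hT) u φ⟩
end

section
/- The axiom system AXun(S) is sound for the language Lprop(S) with respect to the class Tun(S): every formula of Lprop(S) provable in AXun(S) is valid with respect to Tun(S). -/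
section Soundness

variable {S : Signature} {T : CausalModel S} {u : S.Ctx}

lemma sat_imp_iff (φ ψ : LProp S) :
    T.sat u (φ.imp ψ) ↔ (T.sat u φ → T.sat u ψ) := by
  simp only [LProp.imp, CausalModel.sat]; tauto

lemma sat_or_iff (φ ψ : LProp S) :
    T.sat u (φ.or ψ) ↔ (T.sat u φ ∨ T.sat u ψ) := by
  simp only [LProp.or, CausalModel.sat]; tauto

lemma evalB_sat (φ : LProp S) : LProp.evalB (T.sat u) φ ↔ T.sat u φ := by
  induction φ <;> simp [LProp.evalB, CausalModel.sat, *]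

lemma solveUpdate {g : S.Intervention} {a : S.Asgn} {W : S.endo} {w : S.range W}
    (h : T.isSolution g u a) (haW : a W = w) :
    T.isSolution (Function.update g W (some w)) u a := by
  intro X
  by_cases hX : X = W
  · subst hX
    refine ⟨fun x hx => ?_, fun hn => ?_⟩
    · rw [Function.update_self] at hx
      rw [haW]; exact Option.some_injective _ hx
    · rw [Function.update_self] at hn; cases hn
  · rw [Function.update_of_ne hX]; exact h X

lemma sol_update_val {g : S.Intervention} {a : S.Asgn} {W : S.endo} {w : S.range W}
    (h : T.isSolution (Function.update g W (some w)) u a) : a W = w :=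
  (h W).1 w (Function.update_self _ _ _)

/-- The unique solution determines basic satisfaction. -/
lemma sat_basic_of_sol (hT : T.UniqueSolutions) {g : S.Intervention} {a : S.Asgn}
    (ha : T.isSolution g u a) {X : S.endo} {x : S.range X} (hx : a X = x) :
    T.sat u (.basic g X x) := by
  intro b hb
  obtain ⟨c, _, hcu⟩ := hT g u
  rw [hcu b hb, ← hcu a ha, hx]

lemma bigOrNe_sat (hT : T.UniqueSolutions) {g : S.Intervention} {a : S.Asgn}
    (ha : T.isSolution g u a) {X : S.endo} :
    ∀ (l : List (S.range X)) (x0 : S.range X), (a X = x0 ∨ a X ∈ l) →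
      T.sat u (LProp.bigOrNe (.basic g X x0) (l.map fun x => LProp.basic g X x)) := by
  intro l
  induction l with
  | nil =>
    intro x0 hx
    simp only [List.mem_nil_iff, or_false] at hx
    exact sat_basic_of_sol hT ha hx
  | cons y l ih =>
    intro x0 hx
    simp only [List.map_cons, LProp.bigOrNe]
    rw [sat_or_iff]
    rcases hx with hx | hx
    · exact Or.inl (sat_basic_of_sol hT ha hx)
    · refine Or.inr (ih y ?_)
      simp only [List.mem_cons] at hx
      tauto

/-- AXun(S) is sound for `Lprop(S)` with respect to `Tun(S)`:
every provable formula is valid. -/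
theorem stmt17 (S : Signature) (φ : LProp S) (h : AXunProv S φ) :
    ∀ T : CausalModel S, T.UniqueSolutions → ∀ u : S.Ctx, T.sat u φ := by
  induction h with
  | @taut φ ht =>
    intro T hT u
    exact (evalB_sat φ).1 (ht (T.sat u))
  | c1 g X x x' hne =>
    intro T hT u
    rw [sat_imp_iff]
    intro hx
    obtain ⟨a, ha, _⟩ := hT g u
    intro hx'
    exact hne ((hx a ha).symm.trans (hx' a ha))
  | c2 g X x0 l hl =>
    intro T hT u
    obtain ⟨a, ha, _⟩ := hT g u
    refine bigOrNe_sat hT ha l x0 ?_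
    have : a X ∈ x0 :: l := by
      rw [hl]; exact Finset.mem_toList.mpr (Finset.mem_univ _)
    simpa using this
  | c3 g W w Y y hW =>
    intro T hT u
    rw [sat_imp_iff]
    rintro ⟨hw, hy⟩
    obtain ⟨a, ha, _⟩ := hT g u
    exact sat_basic_of_sol hT (solveUpdate ha (hw a ha)) (hy a ha)
  | c4 g X x hx =>
    intro T hT u a ha
    exact (ha X).1 x hx
  | c5 g W w Y y hne hW hY =>
    intro T hT u
    rw [sat_imp_iff]
    rintro ⟨h1, h2⟩
    -- g1 = g[W←w], g2 = g[Y←y], g3 = g[W←w][Y←y]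
    obtain ⟨s, hs, _⟩ := hT (Function.update g W (some w)) u
    obtain ⟨t, ht, _⟩ := hT (Function.update g Y (some y)) u
    obtain ⟨r, hr, hru⟩ :=
      hT (Function.update (Function.update g W (some w)) Y (some y)) u
    have hsy : s Y = y := h1 s hs
    have htw : t W = w := h2 t ht
    -- both s and t solve g3
    have hs3 : T.isSolution
        (Function.update (Function.update g W (some w)) Y (some y)) u s :=
      solveUpdate hs hsy
    have ht3 : T.isSolution
        (Function.update (Function.update g W (some w)) Y (some y)) u t := by
      have := solveUpdate ht htw
      rwa [Function.update_comm hne] at this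
    have hst : s = t := (hru s hs3).trans (hru t ht3).symm
    -- s solves g
    have hsg : T.isSolution g u s := by
      intro X
      by_cases hXY : X = Y
      · subst hXY
        refine ⟨fun x hx => ?_, fun _ => ?_⟩
        · rw [hY] at hx; cases hx
        · have := (hs X).2
          rw [Function.update_of_ne hne] at this
          exact this hY
      · by_cases hXW : X = W
        · subst hXW
          refine ⟨fun x hx => ?_, fun _ => ?_⟩
          · rw [hW] at hx; cases hx
          · have := (ht X).2
            rw [Function.update_of_ne (fun h => hne h.symm), hW] at this
            rw [hst]; exact this rfl
        · have := hs X
          rwa [Function.update_of_ne hXW] at this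
    intro b hb
    obtain ⟨c, _, hcu⟩ := hT g u
    rw [hcu b hb, ← hcu s hsg, hsy]
  | mp hφψ hφ ihφψ ihφ =>
    intro T hT u
    exact (sat_imp_iff _ _).1 (ihφψ T hT u) (ihφ T hT u)

end Soundness
end
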